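/- arXiv:2508.13931 — 5 statements merged into one kernel-verified Lean document; each statement's English description precedes it below -/
import Mathlib

section
/- Let f : [0,1] → ℝ be continuous and let m ≥ 1 be an integer. Then for every x ∈ [0,1], |B_m(f;x) − f(x)| ≤ (3/2)·ω₂(f; σ(x)/√m). -/
open Set Finset

/-- Bernstein basis polynomial `p_{m,k}(x) = C(m,k) x^k (1-x)^{m-k}`. -/
noncomputable def bern (m k : ℕ) (x : ℝ) : ℝ :=
  (m.choose k : ℝ) * x ^ k * (1 - x) ^ (m - k)

/-- The `m`-th Bernstein polynomial of `f`. -/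
noncomputable def Bpoly (m : ℕ) (f : ℝ → ℝ) (x : ℝ) : ℝ :=
  ∑ k ∈ Finset.range (m + 1), f ((k : ℝ) / m) * bern m k x

/-- `σ(x) = √(x(1-x))`. -/
noncomputable def sigm (x : ℝ) : ℝ := Real.sqrt (x * (1 - x))

/-- The second modulus of continuity of `f` on `[0,1]`. -/
noncomputable def omega2 (f : ℝ → ℝ) (δ : ℝ) : ℝ :=
  sSup {v | ∃ x h : ℝ, 0 ≤ h ∧ h ≤ δ ∧ x - h ∈ Set.Icc (0:ℝ) 1 ∧ x + h ∈ Set.Icc (0:ℝ) 1 ∧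
    v = |f (x + h) - 2 * f x + f (x - h)|}

lemma bern_eq_eval (m k : ℕ) (x : ℝ) :
    bern m k x = Polynomial.eval x (bernsteinPolynomial ℝ m k) := by
  simp [bern, bernsteinPolynomial]

lemma bern_nonneg {m k : ℕ} {x : ℝ} (hx : x ∈ Set.Icc (0:ℝ) 1) : 0 ≤ bern m k x := by
  obtain ⟨h0, h1⟩ := hx
  have h2 : (0:ℝ) ≤ 1 - x := by linarith
  have := Nat.choose_pos (n := m) (k := k)
  apply mul_nonneg (mul_nonneg (by positivity) (by positivity)) (by positivity)

lemma bern_sum (m : ℕ) (x : ℝ) : ∑ k ∈ Finset.range (m+1), bern m k x = 1 := by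
  have := congrArg (Polynomial.eval x) (bernsteinPolynomial.sum ℝ m)
  simpa [Polynomial.eval_finset_sum, bern_eq_eval] using this

lemma bern_sum_smul (m : ℕ) (x : ℝ) :
    ∑ k ∈ Finset.range (m+1), (k : ℝ) * bern m k x = m * x := by
  have := congrArg (Polynomial.eval x) (bernsteinPolynomial.sum_smul ℝ m)
  simpa [Polynomial.eval_finset_sum, bern_eq_eval, mul_comm] using this

lemma bern_sum_mul_smul (m : ℕ) (x : ℝ) :
    ∑ k ∈ Finset.range (m+1), ((k : ℝ)^2 - k) * bern m k x = ((m:ℝ)^2 - m) * x^2 := by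
  have h := congrArg (Polynomial.eval x) (bernsteinPolynomial.sum_mul_smul ℝ m)
  rw [Polynomial.eval_finset_sum] at h
  calc ∑ k ∈ Finset.range (m+1), ((k : ℝ)^2 - k) * bern m k x
      = ∑ k ∈ Finset.range (m+1), Polynomial.eval x ((k * (k-1)) • bernsteinPolynomial ℝ m k) := by
        refine Finset.sum_congr rfl fun k _ => ?_
        rw [Polynomial.eval_smul, bern_eq_eval, nsmul_eq_mul]
        congr 1
        cases k with
        | zero => norm_num
        | succ n => push_cast [Nat.succ_sub_one, Polynomial.eval_pow, Polynomial.eval_X]; ring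
    _ = Polynomial.eval x ((m * (m-1)) • (Polynomial.X:Polynomial ℝ)^2) := h
    _ = ((m:ℝ)^2 - m) * x^2 := by
        rw [Polynomial.eval_smul, nsmul_eq_mul]
        cases m with
        | zero => norm_num
        | succ n => push_cast [Nat.succ_sub_one, Polynomial.eval_pow, Polynomial.eval_X]; ring

lemma bern_variance (m : ℕ) (hm : 1 ≤ m) (x : ℝ) :
    ∑ k ∈ Finset.range (m+1), ((k:ℝ)/m - x)^2 * bern m k x = x * (1-x) / m := by
  have hm0 : (m:ℝ) ≠ 0 := Nat.cast_ne_zero.mpr (by omega)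
  have expand : ∀ k ∈ Finset.range (m+1), ((k:ℝ)/m - x)^2 * bern m k x =
      (1/m^2) * (((k:ℝ)^2 - k) * bern m k x) + ((1/m^2) - (2*x)/m) * ((k:ℝ) * bern m k x)
        + x^2 * bern m k x := by
    intro k _
    field_simp
    ring
  rw [Finset.sum_congr rfl expand]
  rw [Finset.sum_add_distrib, Finset.sum_add_distrib, ← Finset.mul_sum, ← Finset.mul_sum,
    ← Finset.mul_sum, bern_sum, bern_sum_smul, bern_sum_mul_smul]
  field_simp
  ring

lemma omega2_bdd {f : ℝ → ℝ} (hf : ContinuousOn f (Set.Icc 0 1)) (δ : ℝ) :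
    BddAbove {v | ∃ x h : ℝ, 0 ≤ h ∧ h ≤ δ ∧ x - h ∈ Set.Icc (0:ℝ) 1 ∧ x + h ∈ Set.Icc (0:ℝ) 1 ∧
      v = |f (x + h) - 2 * f x + f (x - h)|} := by
  obtain ⟨M, hM⟩ := isCompact_Icc.exists_bound_of_continuousOn hf
  refine ⟨4 * M, ?_⟩
  rintro v ⟨y, s, hs0, hsδ, h1, h2, rfl⟩
  have hy : y ∈ Set.Icc (0:ℝ) 1 := ⟨by cases h1; linarith, by cases h2; linarith⟩
  have b1 := hM _ h2
  have b2 := hM _ hy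
  have b3 := hM _ h1
  rw [Real.norm_eq_abs] at b1 b2 b3
  obtain ⟨c1, d1⟩ := abs_le.mp b1
  obtain ⟨c2, d2⟩ := abs_le.mp b2
  obtain ⟨c3, d3⟩ := abs_le.mp b3
  exact abs_le.mpr ⟨by linarith, by linarith⟩

lemma le_omega2 {f : ℝ → ℝ} (hf : ContinuousOn f (Set.Icc 0 1)) {δ y s : ℝ}
    (hs0 : 0 ≤ s) (hsδ : s ≤ δ) (h1 : y - s ∈ Set.Icc (0:ℝ) 1) (h2 : y + s ∈ Set.Icc (0:ℝ) 1) :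
    |f (y + s) - 2 * f y + f (y - s)| ≤ omega2 f δ :=
  le_csSup (omega2_bdd hf δ) ⟨y, s, hs0, hsδ, h1, h2, rfl⟩

lemma omega2_nonneg {f : ℝ → ℝ} (hf : ContinuousOn f (Set.Icc 0 1)) {δ : ℝ} (hδ : 0 ≤ δ) :
    0 ≤ omega2 f δ := by
  have h2 : (1:ℝ)/2 + 0 ∈ Set.Icc (0:ℝ) 1 := by norm_num
  have h1 : (1:ℝ)/2 - 0 ∈ Set.Icc (0:ℝ) 1 := by norm_num
  have := le_omega2 hf (le_refl 0) hδ h1 h2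
  refine le_trans (le_of_eq ?_) this
  rw [show (1:ℝ)/2 + 0 = 1/2 by norm_num, show (1:ℝ)/2 - 0 = 1/2 by norm_num]
  rw [show f (1/2) - 2 * f (1/2) + f (1/2) = 0 by ring, abs_zero]

lemma real_le_of_forall_pos_le_add {a b : ℝ} (h : ∀ ε : ℝ, 0 < ε → a ≤ b + ε) : a ≤ b := by
  by_contra hc
  push_neg at hc
  have := h ((a - b)/2) (by linarith)
  linarith

lemma two_abs_le {A B C : ℝ} (h : A - 2 * C + B = D) : 2 * |C| ≤ |A| + |B| + |D| := by
  have i3 : (2:ℝ) * C = A + B - D := by linarith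
  have i2 : |A + B - D| ≤ |A| + |B| + |D| :=
    le_trans (abs_sub _ _) (by linarith [abs_add_le A B])
  rw [← i3] at i2
  rw [abs_mul, abs_two] at i2
  linarith

lemma chord_key {f : ℝ → ℝ} {a b h ω : ℝ} (hf : ContinuousOn f (Set.Icc a b))
    (hab : a < b) (hh : 0 < h) (hω : 0 ≤ ω)
    (H : ∀ y s : ℝ, 0 < s → s ≤ h → a ≤ y - s → y + s ≤ b →
      |f (y + s) - 2 * f y + f (y - s)| ≤ ω)
    {u : ℝ} (hu : u ∈ Set.Icc a b) :
    |f u - ((b - u) * f a + (u - a) * f b) / (b - a)| ≤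
      (1 + (u - a) * (b - u) / (2 * h ^ 2)) * ω := by
  have hba : b - a ≠ 0 := sub_ne_zero.mpr hab.ne'
  set e : ℝ → ℝ := fun t => f t - ((b - t) * f a + (t - a) * f b) / (b - a) with he
  have hea : e a = 0 := by
    show f a - ((b - a) * f a + (a - a) * f b) / (b - a) = 0
    field_simp
    ring
  have heb : e b = 0 := by
    show f b - ((b - b) * f a + (b - a) * f b) / (b - a) = 0
    field_simp
    ring
  have he_cont : ContinuousOn e (Set.Icc a b) := by
    apply hf.sub
    apply Continuous.continuousOn
    fun_prop
  have hΔ : ∀ y s : ℝ, 0 < s → s ≤ h → a ≤ y - s → y + s ≤ b →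
      |e (y + s) - 2 * e y + e (y - s)| ≤ ω := by
    intro y s hs hsh h1 h2
    have heq : e (y + s) - 2 * e y + e (y - s) = f (y + s) - 2 * f y + f (y - s) := by
      show f (y+s) - ((b - (y+s)) * f a + ((y+s) - a) * f b) / (b - a)
          - 2 * (f y - ((b - y) * f a + (y - a) * f b) / (b - a))
          + (f (y-s) - ((b - (y-s)) * f a + ((y-s) - a) * f b) / (b - a))
          = f (y + s) - 2 * f y + f (y - s)
      field_simp
      ring
    rw [heq]; exact H y s hs hsh h1 h2
  clear he hf H
  -- the ε-perturbed bound
  have key : ∀ ε : ℝ, 0 < ε → ∀ u ∈ Set.Icc a b,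
      |e u| ≤ ω + (u - a) * (b - u) * (ω / (2 * h ^ 2) + ε) := by
    intro ε hε
    set κ : ℝ := ω / (2 * h ^ 2) + ε with hκdef
    have hκ : 0 < κ := by positivity
    have hκval : 2 * h ^ 2 * κ = ω + 2 * h ^ 2 * ε := by
      rw [hκdef]; field_simp
    by_contra hcon
    push_neg at hcon
    obtain ⟨u₀, hu₀, hlt⟩ := hcon
    have hFcont : ContinuousOn (fun t => |e t| - (ω + (t - a) * (b - t) * κ)) (Set.Icc a b) := by
      apply ContinuousOn.sub he_cont.abs
      apply Continuous.continuousOn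
      fun_prop
    obtain ⟨z, hz, hzmax⟩ :=
      isCompact_Icc.exists_isMaxOn (Set.nonempty_Icc.mpr hab.le) hFcont
    have hmax : ∀ t ∈ Set.Icc a b,
        |e t| - (ω + (t - a) * (b - t) * κ) ≤ |e z| - (ω + (z - a) * (b - z) * κ) :=
      fun t ht => hzmax ht
    have hM : 0 < |e z| - (ω + (z - a) * (b - z) * κ) := by
      have := hmax u₀ hu₀
      linarith
    have hza : a < z := by
      rcases lt_or_eq_of_le hz.1 with h' | h'
      · exact h'
      · exfalso
        rw [← h'] at hM
        rw [hea] at hM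
        simp only [abs_zero, sub_self, zero_mul] at hM
        nlinarith
    have hzb : z < b := by
      rcases lt_or_eq_of_le hz.2 with h' | h'
      · exact h'
      · exfalso
        rw [h'] at hM
        rw [heb] at hM
        simp only [abs_zero, sub_self, mul_zero, zero_mul] at hM
        nlinarith
    rcases le_or_gt h (min (z - a) (b - z)) with hmid | hedge
    · -- middle case, step h
      have hm1 : h ≤ z - a := le_trans hmid (min_le_left _ _)
      have hm2 : h ≤ b - z := le_trans hmid (min_le_right _ _)
      have hd := hΔ z h hh (le_refl h) (by linarith) (by linarith)
      have t1 := hmax (z + h) ⟨by linarith, by linarith⟩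
      have t2 := hmax (z - h) ⟨by linarith, by linarith⟩
      have habs := two_abs_le (rfl :
        e (z + h) - 2 * e z + e (z - h) = e (z + h) - 2 * e z + e (z - h))
      have hQsum : (ω + (z + h - a) * (b - (z + h)) * κ) + (ω + (z - h - a) * (b - (z - h)) * κ)
          = 2 * (ω + (z - a) * (b - z) * κ) - 2 * h ^ 2 * κ := by ring
      have habs' : 2 * |e z| ≤ |e (z + h)| + |e (z - h)| + ω := by linarith
      have hpos : 0 < 2 * h ^ 2 * ε := by positivity
      linarith
    · rcases le_total (z - a) (b - z) with hord | hord
      · -- left edge, step z - a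
        have hρpos : 0 < z - a := by linarith
        have hρh : z - a ≤ h := by
          rw [min_eq_left hord] at hedge; exact le_of_lt hedge
        have hd := hΔ z (z - a) hρpos hρh (by linarith) (by linarith)
        have t1 := hmax (z + (z - a)) ⟨by linarith, by linarith⟩
        have h0 : e (z - (z - a)) = 0 := by
          rw [show z - (z - a) = a by ring]; exact hea
        have habs := two_abs_le (rfl :
          e (z + (z - a)) - 2 * e z + e (z - (z - a)) = _)
        rw [h0, abs_zero] at habs
        rw [h0] at hd
        have hQid : (ω + (z + (z - a) - a) * (b - (z + (z - a))) * κ) + ω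
            - 2 * (ω + (z - a) * (b - z) * κ) = -2 * κ * (z - a) ^ 2 := by ring
        have hpos : 0 < 2 * κ * (z - a) ^ 2 := by positivity
        linarith
      · -- right edge, step b - z
        have hρpos : 0 < b - z := by linarith
        have hρh : b - z ≤ h := by
          rw [min_eq_right hord] at hedge; exact le_of_lt hedge
        have hd := hΔ z (b - z) hρpos hρh (by linarith) (by linarith)
        have t1 := hmax (z - (b - z)) ⟨by linarith, by linarith⟩
        have h0 : e (z + (b - z)) = 0 := by
          rw [show z + (b - z) = b by ring]; exact heb
        have habs := two_abs_le (rfl :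
          e (z + (b - z)) - 2 * e z + e (z - (b - z)) = _)
        rw [h0, abs_zero] at habs
        rw [h0] at hd
        have hQid : (ω + (z - (b - z) - a) * (b - (z - (b - z))) * κ) + ω
            - 2 * (ω + (z - a) * (b - z) * κ) = -2 * κ * (b - z) ^ 2 := by ring
        have hpos : 0 < 2 * κ * (b - z) ^ 2 := by positivity
        linarith
  -- pass to the limit ε → 0
  have hpq0 : (0:ℝ) ≤ (u - a) * (b - u) :=
    mul_nonneg (by linarith [hu.1]) (by linarith [hu.2])
  have hgoal : |e u| ≤ ω + (u - a) * (b - u) * (ω / (2 * h ^ 2)) := by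
    rcases eq_or_lt_of_le hpq0 with hpq | hpq
    · have hk := key 1 one_pos u hu
      have e1 : (u - a) * (b - u) * (ω / (2 * h ^ 2) + 1) = 0 := by rw [← hpq]; ring
      have e2 : (u - a) * (b - u) * (ω / (2 * h ^ 2)) = 0 := by rw [← hpq]; ring
      linarith
    · apply real_le_of_forall_pos_le_add
      intro ε' hε'
      have hk := key (ε' / ((u - a) * (b - u))) (by positivity) u hu
      have hexp : (u - a) * (b - u) * (ω / (2 * h ^ 2) + ε' / ((u - a) * (b - u))) =
          (u - a) * (b - u) * (ω / (2 * h ^ 2)) + ε' := by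
        rw [mul_add, mul_div_assoc' ((u - a) * (b - u)) ε', mul_div_cancel_left₀ ε' hpq.ne']
      rw [hexp] at hk
      linarith
  calc |e u| ≤ ω + (u - a) * (b - u) * (ω / (2 * h ^ 2)) := hgoal
    _ = (1 + (u - a) * (b - u) / (2 * h ^ 2)) * ω := by ring

lemma exists_slope {f : ℝ → ℝ} {x h ω' : ℝ} (hf : ContinuousOn f (Set.Icc 0 1))
    (hx0 : 0 < x) (hx1 : x < 1) (hh : 0 < h) (hω : 0 ≤ ω')
    (H : ∀ y s : ℝ, 0 < s → s ≤ h → 0 ≤ y - s → y + s ≤ 1 →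
      |f (y + s) - 2 * f y + f (y - s)| ≤ 2 * h ^ 2 * ω') :
    ∃ c : ℝ, ∀ t ∈ Set.Icc (0:ℝ) 1,
      |f t - f x - c * (t - x)| ≤ (2 * h ^ 2 + (t - x) ^ 2) * ω' := by
  have h2pos : (0:ℝ) < 2 * h ^ 2 := by positivity
  -- cleared form of the chord bound
  have chord' : ∀ a u b : ℝ, 0 ≤ a → a < b → b ≤ 1 → a ≤ u → u ≤ b →
      |(b - a) * f u - ((b - u) * f a + (u - a) * f b)| ≤
        (b - a) * (2 * h ^ 2 + (u - a) * (b - u)) * ω' := by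
    intro a u b ha hab hb hau hub
    have hba : (0:ℝ) < b - a := by linarith
    have hc := chord_key (f := f) (a := a) (b := b) (h := h) (ω := 2 * h ^ 2 * ω')
      (hf.mono (Set.Icc_subset_Icc ha hb)) hab hh (by positivity)
      (fun y s hs hsh h1 h2 => H y s hs hsh (by linarith) (by linarith)) ⟨hau, hub⟩
    have hmul : (b - a) * (f u - ((b - u) * f a + (u - a) * f b) / (b - a)) =
        (b - a) * f u - ((b - u) * f a + (u - a) * f b) := by
      field_simp
    have habs : (b - a) * |f u - ((b - u) * f a + (u - a) * f b) / (b - a)| =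
        |(b - a) * f u - ((b - u) * f a + (u - a) * f b)| := by
      rw [← hmul, abs_mul, abs_of_pos hba]
    have hrhs : (b - a) * ((1 + (u - a) * (b - u) / (2 * h ^ 2)) * (2 * h ^ 2 * ω')) =
        (b - a) * (2 * h ^ 2 + (u - a) * (b - u)) * ω' := by
      field_simp
    calc |(b - a) * f u - ((b - u) * f a + (u - a) * f b)|
        = (b - a) * |f u - ((b - u) * f a + (u - a) * f b) / (b - a)| := habs.symm
      _ ≤ (b - a) * ((1 + (u - a) * (b - u) / (2 * h ^ 2)) * (2 * h ^ 2 * ω')) :=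
          mul_le_mul_of_nonneg_left hc hba.le
      _ = _ := hrhs
  set W : ℝ → ℝ := fun u => (2 * h ^ 2 + (u - x) ^ 2) * ω' with hW
  have hWnn : ∀ u : ℝ, 0 ≤ W u := fun u => mul_nonneg (by positivity) hω
  -- same-side (right of x) pairing
  have keyR : ∀ s t : ℝ, x < s → s ≤ 1 → x < t → t ≤ 1 →
      (f t - f x - W t) * (s - x) ≤ (f s - f x + W s) * (t - x) := by
    intro s t hs hs1 ht ht1
    rcases lt_trichotomy s t with hst | hst | hst
    · have hc := chord' x s t hx0.le (by linarith) ht1 (by linarith) (by linarith)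
      have hZ := (abs_le.mp hc).1
      have q1 : 0 ≤ ω' * ((s - x) * h ^ 2) :=
        mul_nonneg hω (mul_nonneg (by linarith) (sq_nonneg h))
      have q2 : 0 ≤ ω' * ((s - x) ^ 2 * (t - x)) :=
        mul_nonneg hω (mul_nonneg (sq_nonneg _) (by linarith))
      simp only [hW]
      linarith
    · rw [← hst]
      have q : 0 ≤ W s * (s - x) := mul_nonneg (hWnn s) (by linarith)
      linarith
    · have hc := chord' x t s hx0.le (by linarith) hs1 (by linarith) (by linarith)
      have hZ := (abs_le.mp hc).2
      have q1 : 0 ≤ ω' * ((t - x) ^ 2 * (s - x)) :=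
        mul_nonneg hω (mul_nonneg (sq_nonneg _) (by linarith))
      have q2 : 0 ≤ ω' * (h ^ 2 * (t - x)) :=
        mul_nonneg hω (mul_nonneg (sq_nonneg h) (by linarith))
      simp only [hW]
      linarith
  -- same-side (left of x) pairing
  have keyL : ∀ s t : ℝ, 0 ≤ s → s < x → 0 ≤ t → t < x →
      (x - t) * (f s - f x) - (x - s) * (f t - f x) ≤ (x - t) * W s + (x - s) * W t := by
    intro s t hs0 hs ht0 ht
    rcases lt_trichotomy t s with hst | hst | hst
    · have hc := chord' t s x ht0 (by linarith) hx1.le hst.le hs.le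
      have hZ := (abs_le.mp hc).2
      have q1 : 0 ≤ ω' * ((x - s) ^ 2 * (x - t)) :=
        mul_nonneg hω (mul_nonneg (sq_nonneg _) (by linarith))
      have q3 : 0 ≤ ω' * (h ^ 2 * (x - s)) :=
        mul_nonneg hω (mul_nonneg (sq_nonneg h) (by linarith))
      simp only [hW]
      linarith
    · rw [hst]
      have q1 : 0 ≤ (x - s) * W s := mul_nonneg (by linarith) (hWnn s)
      linarith
    · have hc := chord' s t x hs0 (by linarith) hx1.le hst.le ht.le
      have hZ := (abs_le.mp hc).1
      have q1 : 0 ≤ ω' * ((x - t) ^ 2 * (x - s)) :=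
        mul_nonneg hω (mul_nonneg (sq_nonneg _) (by linarith))
      have q3 : 0 ≤ ω' * (h ^ 2 * (x - t)) :=
        mul_nonneg hω (mul_nonneg (sq_nonneg h) (by linarith))
      simp only [hW]
      linarith
  -- cross pairing
  have keyC : ∀ s t : ℝ, 0 ≤ s → s < x → x < t → t ≤ 1 →
      |(x - s) * (f t - f x) + (t - x) * (f s - f x)| ≤ (x - s) * W t + (t - x) * W s := by
    intro s t hs0 hs ht ht1
    have hc := chord' s x t hs0 (by linarith) ht1 hs.le ht.le
    have hid : (x - s) * (f t - f x) + (t - x) * (f s - f x) =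
        -((t - s) * f x - ((t - x) * f s + (x - s) * f t)) := by ring
    rw [hid, abs_neg]
    refine le_trans hc (le_of_eq ?_)
    simp only [hW]
    ring
  -- construct the slope as a sup
  set S : Set ℝ := {v | ∃ t : ℝ, 0 ≤ t ∧ t ≤ 1 ∧
    ((x < t ∧ v = (f t - f x - W t) / (t - x)) ∨
     (t < x ∧ v = (f t - f x + W t) / (t - x)))} with hS
  have hub : ∀ v ∈ S, ∀ t : ℝ, x < t → t ≤ 1 → v ≤ (f t - f x + W t) / (t - x) := by
    rintro v ⟨s, hs0, hs1, hcase⟩ t ht ht1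
    rcases hcase with ⟨hsx, rfl⟩ | ⟨hsx, rfl⟩
    · rw [div_le_div_iff₀ (by linarith) (by linarith)]
      exact keyR t s ht ht1 hsx hs1
    · rw [show s - x = -(x - s) by ring, div_neg, neg_le,
        show -((f t - f x + W t) / (t - x)) = (-(f t - f x + W t)) / (t - x) by ring,
        div_le_div_iff₀ (by linarith) (by linarith)]
      have hcc := (abs_le.mp (keyC s t hs0 hsx ht ht1)).1
      linarith
  have hub' : ∀ v ∈ S, ∀ t : ℝ, 0 ≤ t → t < x → v ≤ (f t - f x - W t) / (t - x) := by
    rintro v ⟨s, hs0, hs1, hcase⟩ t ht0 ht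
    rcases hcase with ⟨hsx, rfl⟩ | ⟨hsx, rfl⟩
    · rw [show t - x = -(x - t) by ring, div_neg, le_neg,
        show -((f s - f x - W s) / (s - x)) = (-(f s - f x - W s)) / (s - x) by ring,
        div_le_div_iff₀ (by linarith) (by linarith)]
      have hcc := (abs_le.mp (keyC t s ht0 ht hsx hs1)).2
      linarith
    · rw [show s - x = -(x - s) by ring, show t - x = -(x - t) by ring, div_neg, div_neg,
        neg_le_neg_iff, div_le_div_iff₀ (by linarith) (by linarith)]
      have hcc := keyL t s ht0 ht hs0 hsx
      linarith
  have hSne : S.Nonempty := ⟨(f 1 - f x - W 1) / (1 - x), 1, by norm_num, le_refl 1,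
    Or.inl ⟨hx1, rfl⟩⟩
  have hSbdd : BddAbove S := ⟨(f 1 - f x + W 1) / (1 - x),
    fun v hv => hub v hv 1 hx1 le_rfl⟩
  refine ⟨sSup S, ?_⟩
  rintro t ⟨ht0, ht1⟩
  rcases lt_trichotomy t x with htx | htx | htx
  · have hlo : (f t - f x + W t) / (t - x) ≤ sSup S :=
      le_csSup hSbdd ⟨t, ht0, ht1, Or.inr ⟨htx, rfl⟩⟩
    have hhi : sSup S ≤ (f t - f x - W t) / (t - x) :=
      csSup_le hSne (fun v hv => hub' v hv t ht0 htx)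
    have htn : t - x < 0 := by linarith
    have e1 := (le_div_iff_of_neg htn).mp hhi
    have e2 := (div_le_iff_of_neg htn).mp hlo
    have hWt : W t = (2 * h ^ 2 + (t - x) ^ 2) * ω' := rfl
    exact abs_le.mpr ⟨by linarith, by linarith⟩
  · rw [htx]
    rw [show f x - f x - sSup S * (x - x) = 0 by ring, abs_zero]
    exact hWnn x
  · have hlo : (f t - f x - W t) / (t - x) ≤ sSup S :=
      le_csSup hSbdd ⟨t, ht0, ht1, Or.inl ⟨htx, rfl⟩⟩
    have hhi : sSup S ≤ (f t - f x + W t) / (t - x) :=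
      csSup_le hSne (fun v hv => hub v hv t htx ht1)
    have htp : 0 < t - x := by linarith
    have e1 := (div_le_iff₀ htp).mp hlo
    have e2 := (le_div_iff₀ htp).mp hhi
    have hWt : W t = (2 * h ^ 2 + (t - x) ^ 2) * ω' := rfl
    exact abs_le.mpr ⟨by linarith, by linarith⟩

theorem bernstein_pointwise_bound (f : ℝ → ℝ) (hf : ContinuousOn f (Set.Icc 0 1))
    (m : ℕ) (hm : 1 ≤ m) (x : ℝ) (hx : x ∈ Set.Icc (0:ℝ) 1) :
    |Bpoly m f x - f x| ≤ (3 / 2) * omega2 f (sigm x / Real.sqrt m) := by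
  have hmpos : (0:ℝ) < m := by exact_mod_cast Nat.pos_of_ne_zero (by omega)
  have hmne : (m:ℝ) ≠ 0 := hmpos.ne'
  have hδ0 : 0 ≤ sigm x / Real.sqrt m := by
    apply div_nonneg (Real.sqrt_nonneg _) (Real.sqrt_nonneg _)
  rcases eq_or_lt_of_le hx.1 with hx0 | hx0
  · -- x = 0
    subst hx0
    have hB : Bpoly m f 0 = f 0 := by
      rw [Bpoly]
      rw [Finset.sum_eq_single 0]
      · norm_num [bern]
      · intro k hk hkne
        have : bern m k 0 = 0 := by
          simp [bern, zero_pow hkne]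
        rw [this, mul_zero]
      · intro hnk
        exact absurd (Finset.mem_range.mpr (by omega)) hnk
    rw [hB, sub_self, abs_zero]
    exact mul_nonneg (by norm_num) (omega2_nonneg hf hδ0)
  rcases eq_or_lt_of_le hx.2 with hx1 | hx1
  · -- x = 1
    subst hx1
    have hB : Bpoly m f 1 = f 1 := by
      rw [Bpoly]
      rw [Finset.sum_eq_single m]
      · have : bern m m 1 = 1 := by simp [bern]
        rw [this, mul_one, div_self hmne]
      · intro k hk hkne
        have hkm : k < m := by
          have := Finset.mem_range.mp hk; omega
        have : bern m k 1 = 0 := by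
          have : (1:ℝ) - 1 = 0 := by ring
          simp [bern, this, zero_pow (by omega : m - k ≠ 0)]
        rw [this, mul_zero]
      · intro hnk
        exact absurd (Finset.mem_range.mpr (by omega)) hnk
    rw [hB, sub_self, abs_zero]
    exact mul_nonneg (by norm_num) (omega2_nonneg hf hδ0)
  · -- interior
    have hxx : 0 < x * (1 - x) := mul_pos hx0 (by linarith)
    have hs : 0 < sigm x := Real.sqrt_pos.mpr hxx
    have hh : 0 < sigm x / Real.sqrt m := div_pos hs (Real.sqrt_pos.mpr hmpos)
    set h : ℝ := sigm x / Real.sqrt m with hdef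
    have hsq : h ^ 2 = x * (1 - x) / m := by
      rw [hdef, div_pow, sigm, Real.sq_sqrt hxx.le, Real.sq_sqrt hmpos.le]
    have hωnn : 0 ≤ omega2 f h := omega2_nonneg hf hh.le
    set ω : ℝ := omega2 f h with hωdef
    set ω' : ℝ := ω / (2 * h ^ 2) with hω'def
    have hω'nn : 0 ≤ ω' := div_nonneg hωnn (by positivity)
    have hωval : 2 * h ^ 2 * ω' = ω := by
      rw [hω'def]
      field_simp
    have H : ∀ y s : ℝ, 0 < s → s ≤ h → 0 ≤ y - s → y + s ≤ 1 →
        |f (y + s) - 2 * f y + f (y - s)| ≤ 2 * h ^ 2 * ω' := by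
      intro y s hs0 hsh h1 h2
      rw [hωval]
      exact le_omega2 hf hs0.le hsh ⟨h1, by linarith⟩ ⟨by linarith, h2⟩
    obtain ⟨c, hc⟩ := exists_slope hf hx0 hx1 hh hω'nn H
    have S1 : ∑ k ∈ Finset.range (m+1), ((k:ℝ)/m) * bern m k x = x := by
      have h1 : ∀ k ∈ Finset.range (m+1), ((k:ℝ)/m) * bern m k x
          = (1/m) * ((k:ℝ) * bern m k x) := fun k _ => by ring
      rw [Finset.sum_congr rfl h1, ← Finset.mul_sum, bern_sum_smul]
      field_simp
    have expand : Bpoly m f x - f x =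
        ∑ k ∈ Finset.range (m+1), (f ((k:ℝ)/m) - f x - c * ((k:ℝ)/m - x)) * bern m k x := by
      have h1 : ∀ k ∈ Finset.range (m+1), (f ((k:ℝ)/m) - f x - c * ((k:ℝ)/m - x)) * bern m k x
          = f ((k:ℝ)/m) * bern m k x - f x * bern m k x
            - c * (((k:ℝ)/m) * bern m k x) + (c * x) * bern m k x := fun k _ => by ring
      rw [Finset.sum_congr rfl h1, Finset.sum_add_distrib, Finset.sum_sub_distrib,
        Finset.sum_sub_distrib, ← Finset.mul_sum, ← Finset.mul_sum, ← Finset.mul_sum,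
        bern_sum, S1, Bpoly]
      ring
    have hbound : |Bpoly m f x - f x| ≤
        ∑ k ∈ Finset.range (m+1), (2 * h ^ 2 + ((k:ℝ)/m - x) ^ 2) * ω' * bern m k x := by
      rw [expand]
      refine le_trans (Finset.abs_sum_le_sum_abs _ _) (Finset.sum_le_sum ?_)
      intro k hk
      rw [abs_mul, abs_of_nonneg (bern_nonneg hx)]
      refine mul_le_mul_of_nonneg_right ?_ (bern_nonneg hx)
      have hkm : (k:ℝ) ≤ m := by
        exact_mod_cast Nat.lt_succ_iff.mp (Finset.mem_range.mp hk)
      exact hc _ ⟨by positivity, by rw [div_le_one hmpos]; exact hkm⟩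
    have hsum : ∑ k ∈ Finset.range (m+1), (2 * h ^ 2 + ((k:ℝ)/m - x) ^ 2) * ω' * bern m k x
        = 3 * h ^ 2 * ω' := by
      have h1 : ∀ k ∈ Finset.range (m+1), (2 * h ^ 2 + ((k:ℝ)/m - x) ^ 2) * ω' * bern m k x
          = (2 * h ^ 2 * ω') * bern m k x + ω' * (((k:ℝ)/m - x) ^ 2 * bern m k x) :=
        fun k _ => by ring
      rw [Finset.sum_congr rfl h1, Finset.sum_add_distrib, ← Finset.mul_sum, ← Finset.mul_sum,
        bern_sum, bern_variance m hm x, ← hsq]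
      ring
    have hfinal : 3 * h ^ 2 * ω' = 3 / 2 * ω := by
      rw [hω'def]
      field_simp
    rw [hsum, hfinal] at hbound
    exact hbound
end

section
/- Let k ≥ 0 and m > k be integers, let μ be a probability measure on ℝ with μ([0,k]) = 1, and let f : [0,1] → ℝ be continuous with f(t) = c for all t ∈ (a,b), where 0 < a < b < 1 and c is a constant. Then for every x ∈ ( ma/(m−k), (mb−k)/(m−k) ), |L_{m,k}(f;x) − f(x)| ≤ ‖f − c‖ · [ exp( −(m−k)·r(x, ma/(m−k)) ) + exp( −(m−k)·r(x, (mb−k)/(m−k)) ) ], where ‖f − c‖ = sup_{t∈[0,1]} |f(t) − c|. -/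
open Set Finset MeasureTheory

/-- Bernstein–Kantorovich type operator
`L_{m,k}(f;x) = Σ_{l=0}^{m-k} p_{m-k,l}(x) ∫ f((l+t)/m) dμ(t)`. -/
noncomputable def Lop (m k : ℕ) (μ : Measure ℝ) (f : ℝ → ℝ) (x : ℝ) : ℝ :=
  ∑ l ∈ Finset.range (m - k + 1), bern (m - k) l x * ∫ t, f (((l : ℝ) + t) / m) ∂μ

/-- `r(x,θ) = θ log(θ/x) + (1-θ) log((1-θ)/(1-x))`. -/
noncomputable def rfun (x θ : ℝ) : ℝ :=
  θ * Real.log (θ / x) + (1 - θ) * Real.log ((1 - θ) / (1 - x))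

lemma bern_nonneg_s4 (n l : ℕ) (x : ℝ) (h0 : 0 ≤ x) (h1 : x ≤ 1) : 0 ≤ bern n l x := by
  have h : 0 ≤ 1 - x := by linarith
  unfold bern; positivity

lemma sum_s_bern (n : ℕ) (x s θ : ℝ) (hs : 0 < s) :
    ∑ l ∈ range (n+1), s ^ ((l:ℝ) - n*θ) * bern n l x
      = s ^ (-((n:ℝ)*θ)) * (s*x + (1-x))^n := by
  rw [add_pow, Finset.mul_sum]
  refine Finset.sum_congr rfl fun l hl => ?_
  have : s ^ ((l:ℝ) - n*θ) = s ^ (-((n:ℝ)*θ)) * s ^ l := by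
    rw [← Real.rpow_natCast s l, ← Real.rpow_add hs]
    ring_nf
  rw [this, bern, mul_pow]
  ring

lemma key_identity (n : ℕ) (x θ : ℝ) (hθ0 : 0 < θ) (hθ1 : θ < 1) (hx0 : 0 < x) (hx1 : x < 1) :
    (θ*(1-x)/((1-θ)*x)) ^ (-((n:ℝ)*θ)) * ((θ*(1-x)/((1-θ)*x))*x + (1-x))^n
      = Real.exp (-(n:ℝ) * rfun x θ) := by
  have h1θ : 0 < 1 - θ := by linarith
  have h1x : 0 < 1 - x := by linarith
  set s := θ*(1-x)/((1-θ)*x) with hs_def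
  have hs : 0 < s := by positivity
  have hsum : s*x + (1-x) = (1-x)/(1-θ) := by
    have hsx : s * x * (1 - θ) = θ * (1 - x) := by
      rw [hs_def, div_mul_eq_mul_div, div_mul_eq_mul_div, div_eq_iff (by positivity)]; ring
    field_simp [hs_def]
    linear_combination hsx
  rw [hsum]
  have hpos : (0:ℝ) < s ^ (-((n:ℝ)*θ)) * ((1-x)/(1-θ))^n := by positivity
  rw [← Real.exp_log hpos]
  congr 1
  rw [Real.log_mul (by positivity) (by positivity), Real.log_rpow hs, Real.log_pow,
    hs_def, Real.log_div (by positivity) (by positivity), Real.log_mul (by positivity) (by positivity),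
    Real.log_mul (by positivity) (by positivity), Real.log_div (by positivity) (by positivity)]
  unfold rfun
  rw [Real.log_div (by positivity) (by positivity), Real.log_div (by positivity) (by positivity)]
  ring

lemma chernoff_low (n : ℕ) (x θ : ℝ) (hθ0 : 0 < θ) (hθx : θ < x) (hx1 : x < 1) :
    ∑ l ∈ range (n+1), (if (l:ℝ) ≤ n*θ then bern n l x else 0)
      ≤ Real.exp (-(n:ℝ) * rfun x θ) := by
  have hx0 : 0 < x := hθ0.trans hθx
  have hθ1 : θ < 1 := hθx.trans hx1
  have h1θ : 0 < 1 - θ := by linarith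
  have h1x : 0 < 1 - x := by linarith
  set s := θ*(1-x)/((1-θ)*x) with hs_def
  have hs : 0 < s := by positivity
  have hs1 : s ≤ 1 := by
    rw [hs_def, div_le_one (by positivity)]
    nlinarith
  calc ∑ l ∈ range (n+1), (if (l:ℝ) ≤ n*θ then bern n l x else 0)
      ≤ ∑ l ∈ range (n+1), s ^ ((l:ℝ) - n*θ) * bern n l x := by
        refine Finset.sum_le_sum fun l hl => ?_
        have hb := bern_nonneg_s4 n l x hx0.le hx1.le
        split_ifs with h
        · have h1 : (1:ℝ) ≤ s ^ ((l:ℝ) - n*θ) := by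
            calc (1:ℝ) = s ^ (0:ℝ) := (Real.rpow_zero s).symm
              _ ≤ _ := Real.rpow_le_rpow_of_exponent_ge hs hs1 (by linarith)
          exact le_mul_of_one_le_left hb h1
        · positivity
    _ = Real.exp (-(n:ℝ) * rfun x θ) := by
        rw [sum_s_bern n x s θ hs, ← key_identity n x θ hθ0 hθ1 hx0 hx1]

lemma chernoff_high (n : ℕ) (x θ : ℝ) (hx0 : 0 < x) (hxθ : x < θ) (hθ1 : θ < 1) :
    ∑ l ∈ range (n+1), (if (n:ℝ)*θ ≤ l then bern n l x else 0)
      ≤ Real.exp (-(n:ℝ) * rfun x θ) := by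
  have hθ0 : 0 < θ := hx0.trans hxθ
  have hx1 : x < 1 := hxθ.trans hθ1
  have h1θ : 0 < 1 - θ := by linarith
  have h1x : 0 < 1 - x := by linarith
  set s := θ*(1-x)/((1-θ)*x) with hs_def
  have hs : 0 < s := by positivity
  have hs1 : 1 ≤ s := by
    rw [hs_def, le_div_iff₀ (by positivity)]
    nlinarith
  calc ∑ l ∈ range (n+1), (if (n:ℝ)*θ ≤ l then bern n l x else 0)
      ≤ ∑ l ∈ range (n+1), s ^ ((l:ℝ) - n*θ) * bern n l x := by
        refine Finset.sum_le_sum fun l hl => ?_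
        have hb := bern_nonneg_s4 n l x hx0.le hx1.le
        split_ifs with h
        · exact le_mul_of_one_le_left hb (Real.one_le_rpow hs1 (by linarith))
        · positivity
    _ = Real.exp (-(n:ℝ) * rfun x θ) := by
        rw [sum_s_bern n x s θ hs, ← key_identity n x θ hθ0 hθ1 hx0 hx1]

lemma sum_bern_eq_one (n : ℕ) (x : ℝ) : ∑ l ∈ range (n+1), bern n l x = 1 := by
  calc ∑ l ∈ range (n+1), bern n l x
      = ∑ l ∈ range (n+1), x^l * (1-x)^(n-l) * (n.choose l : ℝ) := by
        refine Finset.sum_congr rfl fun l _ => ?_; rw [bern]; ring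
    _ = (x + (1-x))^n := (add_pow x (1-x) n).symm
    _ = 1 := by norm_num

set_option maxHeartbeats 1000000 in
theorem kantorovich_locally_constant_bound (k m : ℕ) (hkm : k < m)
    (μ : Measure ℝ) [IsProbabilityMeasure μ] (hμ : μ (Set.Icc (0:ℝ) k) = 1)
    (f : ℝ → ℝ) (hf : ContinuousOn f (Set.Icc 0 1))
    (a b c : ℝ) (ha : 0 < a) (hab : a < b) (hb : b < 1)
    (hconst : ∀ t ∈ Set.Ioo a b, f t = c)
    (x : ℝ) (hx : x ∈ Set.Ioo (m * a / (m - k)) ((m * b - k) / (m - k))) :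
    |Lop m k μ f x - f x| ≤
      (sSup {v | ∃ t ∈ Set.Icc (0:ℝ) 1, v = |f t - c|}) *
        (Real.exp (-(m - k : ℝ) * rfun x (m * a / (m - k))) +
          Real.exp (-(m - k : ℝ) * rfun x ((m * b - k) / (m - k)))) := by
  obtain ⟨hxl, hxr⟩ := hx
  set n := m - k with hn
  have hn0 : 0 < n := Nat.sub_pos_of_lt hkm
  have hcast : (m:ℝ) - k = (n:ℝ) := by
    rw [hn, Nat.cast_sub hkm.le]
  have hmR : (0:ℝ) < m := by exact_mod_cast Nat.lt_of_le_of_lt (Nat.zero_le k) hkm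
  have hnR : (0:ℝ) < n := by exact_mod_cast hn0
  have hkR : (0:ℝ) ≤ k := Nat.cast_nonneg k
  set θ₁ : ℝ := m * a / ((m:ℝ) - k) with hθ₁def
  set θ₂ : ℝ := (m * b - k) / ((m:ℝ) - k) with hθ₂def
  have hnθ₁ : (n:ℝ) * θ₁ = m * a := by
    rw [hθ₁def, hcast]; field_simp
  have hnθ₂ : (n:ℝ) * θ₂ = m * b - k := by
    rw [hθ₂def, hcast]; field_simp
  have hθ₁0 : 0 < θ₁ := by rw [hθ₁def, hcast]; positivity
  have hθ₂1 : θ₂ < 1 := by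
    rw [hθ₂def, hcast, div_lt_one hnR, ← hcast]
    nlinarith
  have haθ₁ : a ≤ θ₁ := by
    rw [hθ₁def, hcast, le_div_iff₀ hnR, ← hcast]
    nlinarith
  have hθ₂b : θ₂ ≤ b := by
    rw [hθ₂def, hcast, div_le_iff₀ hnR, ← hcast]
    nlinarith
  have hxab : x ∈ Set.Ioo a b := ⟨lt_of_le_of_lt haθ₁ hxl, lt_of_lt_of_le hxr hθ₂b⟩
  have hx0 : 0 < x := hθ₁0.trans hxl
  have hx1 : x < 1 := hxr.trans_le hθ₂1.le
  have hfx : f x = c := hconst x hxab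
  -- the sup
  set M := sSup {v | ∃ t ∈ Set.Icc (0:ℝ) 1, v = |f t - c|} with hMdef
  have hScont : ContinuousOn (fun t => |f t - c|) (Set.Icc (0:ℝ) 1) :=
    ((hf.sub continuousOn_const).abs)
  have hSimg : {v | ∃ t ∈ Set.Icc (0:ℝ) 1, v = |f t - c|}
      = (fun t => |f t - c|) '' Set.Icc (0:ℝ) 1 := by
    ext v; simp only [Set.mem_setOf_eq, Set.mem_image]
    constructor
    · rintro ⟨t, ht, rfl⟩; exact ⟨t, ht, rfl⟩
    · rintro ⟨t, ht, rfl⟩; exact ⟨t, ht, rfl⟩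
  have hbdd : BddAbove {v | ∃ t ∈ Set.Icc (0:ℝ) 1, v = |f t - c|} := by
    rw [hSimg]
    exact (isCompact_Icc.image_of_continuousOn hScont).bddAbove
  have hM : ∀ u ∈ Set.Icc (0:ℝ) 1, |f u - c| ≤ M :=
    fun u hu => le_csSup hbdd ⟨u, hu, rfl⟩
  have hM0 : 0 ≤ M := le_trans (abs_nonneg _) (hM 0 ⟨le_refl 0, zero_le_one⟩)
  -- clamp
  set F : ℝ → ℝ := fun u => f (max 0 (min 1 u)) with hFdef
  have hclamp_mem : ∀ u : ℝ, max 0 (min 1 u) ∈ Set.Icc (0:ℝ) 1 :=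
    fun u => ⟨le_max_left _ _, max_le zero_le_one (min_le_left _ _)⟩
  have hclamp_id : ∀ u ∈ Set.Icc (0:ℝ) 1, max 0 (min 1 u) = u := by
    rintro u ⟨h0, h1⟩; rw [min_eq_right h1, max_eq_right h0]
  have hFcont : Continuous F := by
    refine hf.comp_continuous (continuous_const.max (continuous_const.min continuous_id)) hclamp_mem
  have hFM : ∀ u : ℝ, |F u - c| ≤ M := fun u => hM _ (hclamp_mem u)
  -- a.e. membership
  have hae : ∀ᵐ t ∂μ, t ∈ Set.Icc (0:ℝ) (k:ℝ) := by
    rw [MeasureTheory.ae_iff]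
    have : {t : ℝ | ¬ t ∈ Set.Icc (0:ℝ) (k:ℝ)} = (Set.Icc (0:ℝ) (k:ℝ))ᶜ := rfl
    rw [this, measure_compl measurableSet_Icc (measure_ne_top μ _), hμ, measure_univ]
    simp
  -- per-l facts
  have hginto : ∀ l ∈ range (n+1), ∀ t ∈ Set.Icc (0:ℝ) (k:ℝ),
      ((l:ℝ) + t) / m ∈ Set.Icc (0:ℝ) 1 := by
    intro l hl t ht
    have hln : l ≤ n := Nat.lt_succ_iff.mp (Finset.mem_range.mp hl)
    have hlnR : (l:ℝ) ≤ n := by exact_mod_cast hln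
    constructor
    · apply div_nonneg _ hmR.le
      have := ht.1; positivity
    · rw [div_le_one hmR]
      have : (n:ℝ) + k = m := by rw [← hcast]; ring
      nlinarith [ht.2]
  have hcongr : ∀ l ∈ range (n+1),
      (∫ t, f (((l:ℝ) + t) / m) ∂μ) = ∫ t, F (((l:ℝ) + t) / m) ∂μ := by
    intro l hl
    refine MeasureTheory.integral_congr_ae ?_
    filter_upwards [hae] with t ht
    rw [hFdef]
    simp only
    rw [hclamp_id _ (hginto l hl t ht)]
  have hintF : ∀ l : ℕ, Integrable (fun t => F (((l:ℝ) + t) / m)) μ := by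
    intro l
    refine Integrable.mono' (integrable_const (M + |c|)) ?_ ?_
    · exact (hFcont.comp ((continuous_const.add continuous_id).div_const _)).aestronglyMeasurable
    · refine Filter.Eventually.of_forall fun t => ?_
      have := hFM (((l:ℝ) + t) / m)
      rw [Real.norm_eq_abs]
      have habs := abs_sub_abs_le_abs_sub (F (((l:ℝ) + t) / m)) c
      nlinarith [abs_nonneg c, abs_sub_abs_le_abs_sub (F (((l:ℝ) + t) / m)) c,
        le_abs_self (F (((l:ℝ)+t)/m)), neg_abs_le (F (((l:ℝ)+t)/m)), le_abs_self c, neg_abs_le c,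
        abs_nonneg (F (((l:ℝ)+t)/m) - c)]
  -- tail bound on each integral
  have htail : ∀ l ∈ range (n+1), |(∫ t, f (((l:ℝ) + t) / m) ∂μ) - c| ≤ M := by
    intro l hl
    rw [hcongr l hl]
    have hint := hintF l
    have h1 : (∫ t, F (((l:ℝ) + t) / m) ∂μ) - c
        = ∫ t, (F (((l:ℝ) + t) / m) - c) ∂μ := by
      rw [MeasureTheory.integral_sub hint (integrable_const c), integral_const, probReal_univ]
      simp
    rw [h1, ← Real.norm_eq_abs]
    have := MeasureTheory.norm_integral_le_of_norm_le_const
      (μ := μ) (f := fun t => F (((l:ℝ) + t) / m) - c) (C := M)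
      (Filter.Eventually.of_forall fun t => by rw [Real.norm_eq_abs]; exact hFM _)
    simpa using this
  -- middle terms vanish
  have hmid : ∀ l ∈ range (n+1), (m:ℝ) * a < l → (l:ℝ) < m * b - k →
      (∫ t, f (((l:ℝ) + t) / m) ∂μ) = c := by
    intro l hl h1 h2
    have : (∫ t, f (((l:ℝ) + t) / m) ∂μ) = ∫ _t, c ∂μ := by
      refine MeasureTheory.integral_congr_ae ?_
      filter_upwards [hae] with t ht
      refine hconst _ ⟨?_, ?_⟩
      · rw [lt_div_iff₀ hmR]; nlinarith [ht.1]
      · rw [div_lt_iff₀ hmR]; nlinarith [ht.2]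
    rw [this, integral_const, probReal_univ]; simp
  -- decomposition
  have hdecomp : Lop m k μ f x - f x
      = ∑ l ∈ range (n+1), bern n l x * ((∫ t, f (((l:ℝ) + t) / m) ∂μ) - c) := by
    rw [hfx, Lop, ← hn]
    rw [Finset.sum_congr rfl (fun l _ => mul_sub (bern n l x) _ c), Finset.sum_sub_distrib,
      ← Finset.sum_mul, sum_bern_eq_one, one_mul]
  rw [hdecomp]
  have hbern0 : ∀ l, 0 ≤ bern n l x := fun l => bern_nonneg_s4 n l x hx0.le hx1.le
  calc |∑ l ∈ range (n+1), bern n l x * ((∫ t, f (((l:ℝ) + t) / m) ∂μ) - c)|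
      ≤ ∑ l ∈ range (n+1), |bern n l x * ((∫ t, f (((l:ℝ) + t) / m) ∂μ) - c)| :=
        Finset.abs_sum_le_sum_abs _ _
    _ ≤ ∑ l ∈ range (n+1), M * ((if (l:ℝ) ≤ n*θ₁ then bern n l x else 0)
          + (if (n:ℝ)*θ₂ ≤ l then bern n l x else 0)) := by
        refine Finset.sum_le_sum fun l hl => ?_
        rw [abs_mul, abs_of_nonneg (hbern0 l)]
        rcases le_or_gt (l:ℝ) (n*θ₁) with h1 | h1
        · have h2 : ¬ ((n:ℝ)*θ₂ ≤ l) := by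
            push_neg
            calc (l:ℝ) ≤ n*θ₁ := h1
              _ < n*θ₂ := by
                have : θ₁ < θ₂ := hxl.trans hxr
                exact mul_lt_mul_of_pos_left this hnR
          rw [if_pos h1, if_neg h2, add_zero, mul_comm (bern n l x)]
          exact mul_le_mul_of_nonneg_right (htail l hl) (hbern0 l)
        · rcases le_or_gt ((n:ℝ)*θ₂) l with h2 | h2
          · rw [if_neg (not_le.mpr h1), if_pos h2, zero_add, mul_comm (bern n l x)]
            exact mul_le_mul_of_nonneg_right (htail l hl) (hbern0 l)
          · rw [if_neg (not_le.mpr h1), if_neg (not_le.mpr h2)]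
            rw [hmid l hl (by rw [← hnθ₁]; exact h1) (by rw [← hnθ₂]; exact h2)]
            simp
    _ = M * (∑ l ∈ range (n+1), (if (l:ℝ) ≤ n*θ₁ then bern n l x else 0))
        + M * (∑ l ∈ range (n+1), (if (n:ℝ)*θ₂ ≤ l then bern n l x else 0)) := by
        simp only [mul_add, Finset.sum_add_distrib, ← Finset.mul_sum]
    _ ≤ M * Real.exp (-(n:ℝ) * rfun x θ₁) + M * Real.exp (-(n:ℝ) * rfun x θ₂) := by
        gcongr
        · exact chernoff_low n x θ₁ hθ₁0 hxl hx1
        · exact chernoff_high n x θ₂ hx0 hxr hθ₂1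
    _ = M * (Real.exp (-((m:ℝ) - k) * rfun x θ₁) + Real.exp (-((m:ℝ) - k) * rfun x θ₂)) := by
        rw [hcast]; ring
end

section
/- Let X₁, …, X_n be i.i.d. random variables uniformly distributed on [0,1], so that F(x) = x on [0,1]. Then for every δ > 0: P( sup_{x∈[0,1]} |B_2(Y_n;x) − x| > δ ) ≤ 2 e^{−8nδ²}, and P( sup_{x∈[0,1]} |B_2^{(1)}(Y_n;x) − 1| > δ ) ≤ 2 e^{−nδ²/8}. -/
open Set Finset MeasureTheory ProbabilityTheory

/-- Empirical distribution function `Y_n(x) = (1/n) Σ_r 1{X_r ≤ x}`. -/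
noncomputable def empY {Ω : Type*} (n : ℕ) (X : Fin n → Ω → ℝ) (x : ℝ) (ω : Ω) : ℝ :=
  (1 / n : ℝ) * ∑ r, (if X r ω ≤ x then (1 : ℝ) else 0)

/-- Random Bernstein polynomial `B_m(Y_n;x)`, as a function of `x` for each `ω`. -/
noncomputable def BY {Ω : Type*} (m n : ℕ) (X : Fin n → Ω → ℝ) (ω : Ω) (x : ℝ) : ℝ :=
  ∑ k ∈ Finset.range (m + 1), empY n X ((k : ℝ) / m) ω * bern m k x

lemma mgf_ind_half {Ω : Type*} [MeasurableSpace Ω] (P : Measure Ω)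
    [IsProbabilityMeasure P] (f : Ω → ℝ) (hf : Measurable f)
    (hhalf : (P {ω | f ω ≤ 1/2}).toReal = 1/2) (t : ℝ) :
    mgf (fun ω => (if f ω ≤ 1/2 then (1:ℝ) else 0) - 1/2) P t = Real.cosh (t/2) := by
  set A : Set Ω := {ω | f ω ≤ 1/2} with hA
  have hAm : MeasurableSet A := hf measurableSet_Iic
  have hfun : (fun ω => Real.exp (t * ((if f ω ≤ 1/2 then (1:ℝ) else 0) - 1/2)))
      = fun ω => A.indicator (fun _ => Real.exp (t/2)) ω
        + Aᶜ.indicator (fun _ => Real.exp (-(t/2))) ω := by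
    funext ω
    by_cases h : f ω ≤ 1/2
    · simp only [Set.indicator, hA, Set.mem_setOf_eq, Set.mem_compl_iff, h, if_true, not_true,
        if_false, add_zero]
      norm_num [mul_one_div]
    · simp only [Set.indicator, hA, Set.mem_setOf_eq, Set.mem_compl_iff, h, if_false, not_false_iff,
        if_true, zero_add]
      norm_num [mul_one_div]
  have hcompl : (P Aᶜ).toReal = 1/2 := by
    rw [prob_compl_eq_one_sub hAm, ENNReal.toReal_sub_of_le prob_le_one (by simp), hhalf]
    norm_num
  rw [mgf, hfun, integral_add ((integrable_const _).indicator hAm)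
      ((integrable_const _).indicator hAm.compl),
    integral_indicator_const _ hAm, integral_indicator_const _ hAm.compl, measureReal_def, measureReal_def, hhalf, hcompl,
    Real.cosh_eq]
  simp only [smul_eq_mul]
  ring

lemma hoeff_abs {Ω : Type*} [MeasurableSpace Ω] (P : Measure Ω) [IsProbabilityMeasure P]
    {n : ℕ} (ξ : Fin n → Ω → ℝ) (hmeas : ∀ r, Measurable (ξ r))
    (hind : iIndepFun ξ P)
    (hmgf : ∀ r t, mgf (ξ r) P t = Real.cosh (t/2))
    (c : ℝ) (hc : 0 < c) :
    P {ω | (n:ℝ) * c ≤ |∑ r, ξ r ω|} ≤ ENNReal.ofReal (2 * Real.exp (-(2 * n * c^2))) := by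
  have hint : ∀ (r : Fin n) (t : ℝ), Integrable (fun ω => Real.exp (t * ξ r ω)) P := by
    intro r t
    by_contra h
    have h0 := hmgf r t
    rw [mgf_undef h] at h0
    exact absurd h0.symm (ne_of_gt (Real.cosh_pos _))
  have hS : ∀ t : ℝ, Integrable (fun ω => Real.exp (t * (∑ r, ξ r) ω)) P := fun t =>
    hind.integrable_exp_mul_sum hmeas (fun i _ => hint i t)
  have hmgfS : ∀ t : ℝ, mgf (∑ r, ξ r) P t ≤ Real.exp (n * t^2 / 8) := by
    intro t
    rw [hind.mgf_sum hmeas]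
    calc ∏ r : Fin n, mgf (ξ r) P t = Real.cosh (t/2) ^ n := by
          simp [hmgf]
      _ ≤ Real.exp ((t/2)^2/2) ^ n := by
          exact pow_le_pow_left₀ ((Real.cosh_pos _).le) (Real.cosh_le_exp_half_sq _) n
      _ = Real.exp (n * t^2 / 8) := by
          rw [← Real.exp_nat_mul]; congr 1; ring
  have key : ∀ t ε : ℝ, -t * ε + n * t^2/8 = -(2*n*c^2) → (0 ≤ t → True) → True := fun _ _ _ _ => trivial
  have hup : P {ω | (n:ℝ) * c ≤ (∑ r, ξ r) ω} ≤ ENNReal.ofReal (Real.exp (-(2 * n * c^2))) := by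
    have h1 := measure_ge_le_exp_mul_mgf (μ := P) (X := ∑ r, ξ r) ((n:ℝ)*c)
      (t := 4*c) (by positivity) (hS _)
    rw [← ENNReal.ofReal_toReal (measure_ne_top P _)]
    refine ENNReal.ofReal_le_ofReal (h1.trans ?_)
    calc Real.exp (-(4*c) * (n*c)) * mgf (∑ r, ξ r) P (4*c)
        ≤ Real.exp (-(4*c) * (n*c)) * Real.exp (n * (4*c)^2/8) := by
          exact mul_le_mul_of_nonneg_left (hmgfS _) (Real.exp_pos _).le
      _ = Real.exp (-(2 * n * c^2)) := by rw [← Real.exp_add]; congr 1; ring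
  have hlo : P {ω | (∑ r, ξ r) ω ≤ -((n:ℝ) * c)} ≤ ENNReal.ofReal (Real.exp (-(2 * n * c^2))) := by
    have h1 := measure_le_le_exp_mul_mgf (μ := P) (X := ∑ r, ξ r) (-((n:ℝ)*c))
      (t := -(4*c)) (by linarith) (hS _)
    rw [← ENNReal.ofReal_toReal (measure_ne_top P _)]
    refine ENNReal.ofReal_le_ofReal (h1.trans ?_)
    calc Real.exp (-(-(4*c)) * -(n*c)) * mgf (∑ r, ξ r) P (-(4*c))
        ≤ Real.exp (-(-(4*c)) * -(n*c)) * Real.exp (n * (-(4*c))^2/8) := by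
          exact mul_le_mul_of_nonneg_left (hmgfS _) (Real.exp_pos _).le
      _ = Real.exp (-(2 * n * c^2)) := by rw [← Real.exp_add]; congr 1; ring
  have hsub : {ω | (n:ℝ) * c ≤ |∑ r, ξ r ω|} ⊆
      {ω | (n:ℝ) * c ≤ (∑ r, ξ r) ω} ∪ {ω | (∑ r, ξ r) ω ≤ -((n:ℝ) * c)} := by
    intro ω hω
    simp only [Set.mem_setOf_eq] at hω
    rcases le_abs.mp hω with h | h
    · left; simpa using h
    · right; simp only [Set.mem_setOf_eq, Finset.sum_apply]; linarith [h]
  calc P {ω | (n:ℝ) * c ≤ |∑ r, ξ r ω|} ≤ _ := measure_mono hsub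
    _ ≤ P {ω | (n:ℝ) * c ≤ (∑ r, ξ r) ω} + P {ω | (∑ r, ξ r) ω ≤ -((n:ℝ) * c)} :=
        measure_union_le _ _
    _ ≤ ENNReal.ofReal (Real.exp (-(2 * n * c^2))) + ENNReal.ofReal (Real.exp (-(2 * n * c^2))) :=
        add_le_add hup hlo
    _ = ENNReal.ofReal (2 * Real.exp (-(2 * n * c^2))) := by
        rw [← ENNReal.ofReal_add (Real.exp_pos _).le (Real.exp_pos _).le]; congr 1; ring

theorem uniform_bands
    {Ω : Type*} [MeasurableSpace Ω] (P : Measure Ω) [IsProbabilityMeasure P]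
    (n : ℕ) (hn : 2 ≤ n) (X : Fin n → Ω → ℝ)
    (hmeas : ∀ r, Measurable (X r))
    (hindep : iIndepFun X P)
    (hval : ∀ r ω, X r ω ∈ Set.Icc (0:ℝ) 1)
    (hunif : ∀ r, ∀ x ∈ Set.Icc (0:ℝ) 1, (P {ω | X r ω ≤ x}).toReal = x)
    (δ : ℝ) (hδ : 0 < δ) :
    P {ω | (⨆ x : Set.Icc (0:ℝ) 1, |BY 2 n X ω x - (x : ℝ)|) > δ} ≤
        ENNReal.ofReal (2 * Real.exp (-(8 * n * δ ^ 2))) ∧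
      P {ω | (⨆ x : Set.Icc (0:ℝ) 1, |deriv (fun y => BY 2 n X ω y) x - 1|) > δ} ≤
        ENNReal.ofReal (2 * Real.exp (-(n * δ ^ 2 / 8))) := by
  classical
  haveI : Nonempty (Set.Icc (0:ℝ) 1) := ⟨⟨0, by norm_num⟩⟩
  have hnpos : (0:ℝ) < n := by
    have : (0:ℕ) < n := lt_of_lt_of_le (by norm_num) hn
    exact_mod_cast this
  have hn0 : (n:ℝ) ≠ 0 := ne_of_gt hnpos
  set ξ : Fin n → Ω → ℝ := fun r ω => (if X r ω ≤ 1/2 then (1:ℝ) else 0) - 1/2 with hξ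
  have hg : Measurable (fun x : ℝ => (if x ≤ 1/2 then (1:ℝ) else 0) - 1/2) :=
    ((measurable_const.ite measurableSet_Iic measurable_const).sub measurable_const)
  have hmeasξ : ∀ r, Measurable (ξ r) := fun r => hg.comp (hmeas r)
  have hindξ : iIndepFun ξ P :=
    hindep.comp (fun _ x => (if x ≤ 1/2 then (1:ℝ) else 0) - 1/2) (fun _ => hg)
  have hmgfξ : ∀ r t, mgf (ξ r) P t = Real.cosh (t/2) := fun r t =>
    mgf_ind_half P (X r) (hmeas r) (hunif r (1/2) ⟨by norm_num, by norm_num⟩) t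
  have hoeff : ∀ c : ℝ, 0 < c → P {ω | (n:ℝ) * c ≤ |∑ r, ξ r ω|} ≤
      ENNReal.ofReal (2 * Real.exp (-(2 * n * c^2))) := fun c hc =>
    hoeff_abs P ξ hmeasξ hindξ hmgfξ c hc
  have hN : P (⋃ r, {ω | X r ω ≤ 0}) = 0 := by
    refine measure_iUnion_null fun r => ?_
    have h := hunif r 0 ⟨le_refl _, zero_le_one⟩
    rcases (ENNReal.toReal_eq_zero_iff _).mp h with h' | h'
    · exact h'
    · exact absurd h' (measure_ne_top P _)
  -- pointwise facts
  have hBY : ∀ ω (x : ℝ), BY 2 n X ω x = empY n X 0 ω * (1-x)^2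
      + empY n X (1/2) ω * (2*x*(1-x)) + empY n X 1 ω * x^2 := by
    intro ω x
    simp only [BY, Finset.sum_range_succ, Finset.sum_range_zero, bern]
    norm_num
  have he0 : ∀ ω, (∀ r, 0 < X r ω) → empY n X 0 ω = 0 := by
    intro ω h0
    simp only [empY]
    rw [Finset.sum_eq_zero (fun r _ => if_neg (not_le.mpr (h0 r))), mul_zero]
  have he2 : ∀ ω, empY n X 1 ω = 1 := by
    intro ω
    simp only [empY]
    rw [Finset.sum_congr rfl (fun r _ => if_pos ((hval r ω).2)), Finset.sum_const,
      Finset.card_univ, Fintype.card_fin]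
    simp [hn0]
  have he1 : ∀ ω, empY n X (1/2) ω - 1/2 = (∑ r, ξ r ω) / n := by
    intro ω
    have hs : ∑ r, ξ r ω = (∑ r, (if X r ω ≤ 1/2 then (1:ℝ) else 0)) - n * (1/2) := by
      simp only [hξ]
      rw [Finset.sum_sub_distrib, Finset.sum_const, Finset.card_univ, Fintype.card_fin,
        nsmul_eq_mul]
    rw [hs]
    simp only [empY]
    generalize (∑ r, (if X r ω ≤ 1/2 then (1:ℝ) else 0)) = S
    field_simp
  constructor
  · -- first band
    have hsub : {ω | (⨆ x : Set.Icc (0:ℝ) 1, |BY 2 n X ω x - (x : ℝ)|) > δ} ⊆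
        (⋃ r, {ω | X r ω ≤ 0}) ∪ {ω | (n:ℝ) * (2*δ) ≤ |∑ r, ξ r ω|} := by
      intro ω hω
      by_contra hc
      simp only [Set.mem_union, Set.mem_iUnion, Set.mem_setOf_eq, not_or, not_exists,
        not_le] at hc
      obtain ⟨h0, hlt⟩ := hc
      have he1' : |empY n X (1/2) ω - 1/2| < 2*δ := by
        rw [he1 ω, abs_div, abs_of_pos hnpos, div_lt_iff₀ hnpos]
        linarith [hlt]
      have hb : ∀ x : Set.Icc (0:ℝ) 1, |BY 2 n X ω x - (x:ℝ)| ≤ δ := by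
        rintro ⟨x, hx0, hx1⟩
        have h14 : x*(1-x) ≤ 1/4 := by nlinarith [sq_nonneg (x - 1/2)]
        have hxn : 0 ≤ x*(1-x) := mul_nonneg hx0 (by linarith)
        have heq : BY 2 n X ω x - x = (2 * empY n X (1/2) ω - 1) * (x*(1-x)) := by
          rw [hBY ω x, he0 ω h0, he2 ω]; ring
        have habs : |2 * empY n X (1/2) ω - 1| < 4*δ := by
          have : |2 * (empY n X (1/2) ω - 1/2)| < 4*δ := by
            rw [abs_mul, abs_two]; linarith [he1']
          simpa [mul_sub] using this
        calc |BY 2 n X ω x - x| = |2 * empY n X (1/2) ω - 1| * (x*(1-x)) := by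
              rw [heq, abs_mul, abs_of_nonneg hxn]
          _ ≤ (4*δ) * (1/4) := by
              apply mul_le_mul habs.le h14 hxn (by positivity)
          _ = δ := by ring
      have hsup : (⨆ x : Set.Icc (0:ℝ) 1, |BY 2 n X ω x - (x:ℝ)|) ≤ δ := ciSup_le hb
      exact absurd hω (not_lt.mpr hsup)
    calc P _ ≤ P ((⋃ r, {ω | X r ω ≤ 0}) ∪ {ω | (n:ℝ) * (2*δ) ≤ |∑ r, ξ r ω|}) :=
          measure_mono hsub
      _ ≤ P (⋃ r, {ω | X r ω ≤ 0}) + P {ω | (n:ℝ) * (2*δ) ≤ |∑ r, ξ r ω|} :=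
          measure_union_le _ _
      _ = P {ω | (n:ℝ) * (2*δ) ≤ |∑ r, ξ r ω|} := by rw [hN, zero_add]
      _ ≤ ENNReal.ofReal (2 * Real.exp (-(2 * n * (2*δ)^2))) := hoeff (2*δ) (by positivity)
      _ = ENNReal.ofReal (2 * Real.exp (-(8 * n * δ^2))) := by
          rw [show -(2 * (n:ℝ) * (2*δ)^2) = -(8 * n * δ^2) by ring]
  · -- derivative band
    have hsub : {ω | (⨆ x : Set.Icc (0:ℝ) 1, |deriv (fun y => BY 2 n X ω y) x - 1|) > δ} ⊆
        (⋃ r, {ω | X r ω ≤ 0}) ∪ {ω | (n:ℝ) * (δ/2) ≤ |∑ r, ξ r ω|} := by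
      intro ω hω
      by_contra hc
      simp only [Set.mem_union, Set.mem_iUnion, Set.mem_setOf_eq, not_or, not_exists,
        not_le] at hc
      obtain ⟨h0, hlt⟩ := hc
      have he1' : |empY n X (1/2) ω - 1/2| < δ/2 := by
        rw [he1 ω, abs_div, abs_of_pos hnpos, div_lt_iff₀ hnpos]
        linarith [hlt]
      have hfun : (fun y => BY 2 n X ω y) = fun y => empY n X 0 ω * (1-y)^2
          + empY n X (1/2) ω * (2*y*(1-y)) + empY n X 1 ω * y^2 := funext (hBY ω)
      have hD : ∀ x : ℝ, deriv (fun y => BY 2 n X ω y) x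
          = (2 * empY n X (1/2) ω - 1) * (1 - 2*x) + 1 := by
        intro x
        have h1 : HasDerivAt (fun y:ℝ => (1-y)^2) ((2:ℕ) * (1-x)^1 * (-1)) x :=
          ((hasDerivAt_id x).const_sub 1).pow 2
        have h2 : HasDerivAt (fun y:ℝ => 2*y*(1-y)) (2*1*(1-x) + 2*x*(-1)) x :=
          ((hasDerivAt_id x).const_mul 2).mul ((hasDerivAt_id x).const_sub 1)
        have h3 : HasDerivAt (fun y:ℝ => y^2) ((2:ℕ)*x^1) x := hasDerivAt_pow 2 x
        have hd := (((h1.const_mul (empY n X 0 ω)).add (h2.const_mul (empY n X (1/2) ω))).add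
          (h3.const_mul (empY n X 1 ω))).deriv
        simp only [Pi.add_def] at hd
        rw [hfun, hd, he0 ω h0, he2 ω]
        push_cast
        ring
      have hb : ∀ x : Set.Icc (0:ℝ) 1, |deriv (fun y => BY 2 n X ω y) x - 1| ≤ δ := by
        rintro ⟨x, hx0, hx1⟩
        rw [hD x]
        have h1 : |1 - 2*x| ≤ 1 := abs_le.mpr ⟨by linarith, by linarith⟩
        have habs : |2 * empY n X (1/2) ω - 1| ≤ δ := by
          have : |2 * (empY n X (1/2) ω - 1/2)| ≤ δ := by
            rw [abs_mul, abs_two]; linarith [he1']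
          simpa [mul_sub] using this
        calc |(2 * empY n X (1/2) ω - 1) * (1 - 2*x) + 1 - 1|
            = |2 * empY n X (1/2) ω - 1| * |1 - 2*x| := by rw [add_sub_cancel_right, abs_mul]
          _ ≤ δ * 1 := mul_le_mul habs h1 (abs_nonneg _) (by positivity)
          _ = δ := mul_one δ
      have hsup : (⨆ x : Set.Icc (0:ℝ) 1, |deriv (fun y => BY 2 n X ω y) x - 1|) ≤ δ :=
        ciSup_le hb
      exact absurd hω (not_lt.mpr hsup)
    calc P _ ≤ P ((⋃ r, {ω | X r ω ≤ 0}) ∪ {ω | (n:ℝ) * (δ/2) ≤ |∑ r, ξ r ω|}) :=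
          measure_mono hsub
      _ ≤ P (⋃ r, {ω | X r ω ≤ 0}) + P {ω | (n:ℝ) * (δ/2) ≤ |∑ r, ξ r ω|} :=
          measure_union_le _ _
      _ = P {ω | (n:ℝ) * (δ/2) ≤ |∑ r, ξ r ω|} := by rw [hN, zero_add]
      _ ≤ ENNReal.ofReal (2 * Real.exp (-(2 * n * (δ/2)^2))) := hoeff (δ/2) (by positivity)
      _ ≤ ENNReal.ofReal (2 * Real.exp (-(n * δ^2 / 8))) := by
          apply ENNReal.ofReal_le_ofReal
          apply mul_le_mul_of_nonneg_left _ (by norm_num : (0:ℝ) ≤ 2)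
          apply Real.exp_le_exp.mpr
          nlinarith [sq_nonneg δ, hnpos]
end

section
/- Let X₁, …, X_n be i.i.d. random variables uniformly distributed on [0,1], so that F(x) = x on [0,1]. Then for every x ∈ (0,1) and δ > 0, P( |B_2(Y_n;x) − x| ≥ 4x(1−x)δ ) ≤ 2 e^{−n τ(8δ)/4}, and moreover if 0 < δ ≤ 1/8 the right-hand side is at most 2 exp( −8nδ²(1 − (8/3)δ) ). -/
open Set Finset MeasureTheory ProbabilityTheory

/-- `τ(ε) = (1+ε) log(1+ε) - ε`. -/
noncomputable def tau (ε : ℝ) : ℝ := (1 + ε) * Real.log (1 + ε) - ε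

lemma nonneg_of_hasDerivAt' {f f' : ℝ → ℝ}
    (hd : ∀ y ∈ Set.Ici (0:ℝ), HasDerivAt f (f' y) y) (h0 : f 0 = 0)
    (hf' : ∀ y ∈ Set.Ioi (0:ℝ), 0 ≤ f' y) {x : ℝ} (hx : 0 ≤ x) : 0 ≤ f x := by
  have hmono : MonotoneOn f (Set.Ici 0) := by
    apply monotoneOn_of_deriv_nonneg (convex_Ici 0)
    · exact fun y hy => (hd y hy).continuousAt.continuousWithinAt
    · intro y hy
      rw [interior_Ici] at hy
      exact (hd y (Set.mem_Ici.2 (le_of_lt (Set.mem_Ioi.1 hy)))).differentiableAt.differentiableWithinAt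
    · intro y hy
      rw [interior_Ici] at hy
      rw [(hd y (Set.mem_Ici.2 (le_of_lt (Set.mem_Ioi.1 hy)))).deriv]
      exact hf' y hy
  calc (0:ℝ) = f 0 := h0.symm
  _ ≤ f x := hmono (by simp : (0:ℝ) ∈ Set.Ici (0:ℝ)) hx hx

lemma hasDerivAt_log1p' {y : ℝ} (hy : (-1:ℝ) < y) :
    HasDerivAt (fun z => Real.log (1 + z)) ((1 + y)⁻¹) y := by
  have h1 : HasDerivAt (fun z : ℝ => 1 + z) 1 y := (hasDerivAt_id y).const_add 1
  have := (Real.hasDerivAt_log (by linarith : (1:ℝ) + y ≠ 0)).comp y h1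
  exact this.congr_deriv (mul_one _)

lemma log1p_quad' {y : ℝ} (hy : 0 ≤ y) : 0 ≤ Real.log (1 + y) - y + y^2/2 := by
  apply nonneg_of_hasDerivAt' (f' := fun z => (1+z)⁻¹ - 1 + z) _ (by simp) _ hy
  · intro z hz
    have hz' : (0:ℝ) ≤ z := hz
    have h : HasDerivAt (fun w : ℝ => Real.log (1+w) - w + w^2/2)
        ((1+z)⁻¹ - 1 + 2*z^1/2) z :=
      ((hasDerivAt_log1p' (by linarith)).sub (hasDerivAt_id z)).add
        ((hasDerivAt_pow 2 z).div_const 2)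
    convert h using 1; ring
  · intro z hz
    simp only [Set.mem_Ioi] at hz
    have h1 : (0:ℝ) < 1 + z := by linarith
    have he : (1+z)⁻¹ - 1 + z = z^2/(1+z) := by field_simp; ring
    show (0:ℝ) ≤ (1+z)⁻¹ - 1 + z
    rw [he]; positivity

lemma hasDerivAt_tau' {y : ℝ} (hy : 0 ≤ y) :
    HasDerivAt tau (Real.log (1 + y)) y := by
  have h1 : HasDerivAt (fun z : ℝ => 1 + z) 1 y := (hasDerivAt_id y).const_add 1
  have hm : HasDerivAt (fun z : ℝ => (1+z) * Real.log (1+z))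
      (1 * Real.log (1+y) + (1+y) * (1+y)⁻¹) y := h1.mul (hasDerivAt_log1p' (by linarith))
  have h : HasDerivAt tau (1 * Real.log (1+y) + (1+y) * (1+y)⁻¹ - 1) y :=
    hm.sub (hasDerivAt_id y)
  convert h using 1
  rw [mul_inv_cancel₀ (by linarith : (1:ℝ)+y ≠ 0)]
  ring

lemma tau_le' {y : ℝ} (hy : 0 ≤ y) : tau y ≤ y^2/2 := by
  have := nonneg_of_hasDerivAt' (f := fun z => z^2/2 - tau z)
    (f' := fun z => z - Real.log (1 + z)) ?_ ?_ ?_ hy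
  · linarith
  · intro z hz
    exact ((hasDerivAt_pow 2 z).div_const 2).sub (hasDerivAt_tau' hz) |>.congr_deriv (by ring)
  · simp [tau]
  · intro z hz
    simp only [Set.mem_Ioi] at hz
    have := Real.log_le_sub_one_of_pos (by linarith : (0:ℝ) < 1 + z)
    show (0:ℝ) ≤ z - Real.log (1 + z)
    linarith

lemma tau_ge' {y : ℝ} (hy : 0 ≤ y) : y^2/2 - y^3/6 ≤ tau y := by
  have := nonneg_of_hasDerivAt' (f := fun z => tau z - z^2/2 + z^3/6)
    (f' := fun z => Real.log (1 + z) - z + z^2/2) ?_ ?_ ?_ hy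
  · linarith
  · intro z hz
    exact ((hasDerivAt_tau' hz).sub ((hasDerivAt_pow 2 z).div_const 2)).add
      ((hasDerivAt_pow 3 z).div_const 6) |>.congr_deriv (by ring)
  · simp [tau]
  · intro z hz
    exact log1p_quad' (le_of_lt hz)

lemma exp_ite_aux {Ω : Type*} [MeasurableSpace Ω] (P : Measure Ω) [IsProbabilityMeasure P]
    (f : Ω → ℝ) (hf : Measurable f) (c t : ℝ) :
    Integrable (fun ω => Real.exp (t * (if f ω ≤ c then (1:ℝ) else 0))) P ∧
    ∫ ω, Real.exp (t * (if f ω ≤ c then (1:ℝ) else 0)) ∂P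
      = (Real.exp t - 1) * (P {ω | f ω ≤ c}).toReal + 1 := by
  have hA : MeasurableSet {ω | f ω ≤ c} := measurableSet_le hf measurable_const
  have heq : (fun ω => Real.exp (t * (if f ω ≤ c then (1:ℝ) else 0)))
      = fun ω => Set.indicator {ω | f ω ≤ c} (fun _ => Real.exp t - 1) ω + 1 := by
    funext ω
    by_cases h : f ω ≤ c
    · simp [h, Set.indicator_of_mem, Set.mem_setOf_eq]
    · simp [h, Set.indicator_of_notMem, Set.mem_setOf_eq]
  refine ⟨?_, ?_⟩
  · rw [heq]
    exact ((integrable_const _).indicator hA).add (integrable_const 1)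
  · rw [heq, integral_add ((integrable_const _).indicator hA) (integrable_const 1),
      integral_indicator_const _ hA, integral_const]
    simp [smul_eq_mul, mul_comm]
    exact Or.inl rfl

theorem uniform_pointwise_concentration
    {Ω : Type*} [MeasurableSpace Ω] (P : Measure Ω) [IsProbabilityMeasure P]
    (n : ℕ) (hn : 2 ≤ n) (X : Fin n → Ω → ℝ)
    (hmeas : ∀ r, Measurable (X r))
    (hindep : iIndepFun X P)
    (hval : ∀ r ω, X r ω ∈ Set.Icc (0:ℝ) 1)
    (hunif : ∀ r, ∀ x ∈ Set.Icc (0:ℝ) 1, (P {ω | X r ω ≤ x}).toReal = x)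
    (x : ℝ) (hx : x ∈ Set.Ioo (0:ℝ) 1) (δ : ℝ) (hδ : 0 < δ) :
    P {ω | |BY 2 n X ω x - x| ≥ 4 * x * (1 - x) * δ} ≤
        ENNReal.ofReal (2 * Real.exp (-(n * tau (8 * δ) / 4))) ∧
      (δ ≤ 1 / 8 →
        2 * Real.exp (-(n * tau (8 * δ) / 4)) ≤
          2 * Real.exp (-(8 * n * δ ^ 2 * (1 - (8 / 3) * δ)))) := by
  obtain ⟨hx0, hx1⟩ := hx
  have hnR : (2:ℝ) ≤ (n:ℝ) := by exact_mod_cast hn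
  have hnpos : (0:ℝ) < n := by linarith
  have hn0 : (n:ℝ) ≠ 0 := ne_of_gt hnpos
  -- the Bernoulli indicators
  set g : ℝ → ℝ := fun y => if y ≤ (1/2:ℝ) then 1 else 0 with hg
  have hgm : Measurable g := Measurable.ite measurableSet_Iic measurable_const measurable_const
  set ξ : Fin n → Ω → ℝ := fun r => g ∘ X r with hξ
  have hξm : ∀ r, Measurable (ξ r) := fun r => hgm.comp (hmeas r)
  have hξind : iIndepFun ξ P :=
    hindep.comp (fun _ => g) (fun _ => hgm)
  have hhalf : ∀ r, (P {ω | X r ω ≤ (1/2:ℝ)}).toReal = 1/2 :=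
    fun r => hunif r (1/2) ⟨by norm_num, by norm_num⟩
  have haux : ∀ (t:ℝ) (r : Fin n),
      Integrable (fun ω => Real.exp (t * ξ r ω)) P ∧
      ∫ ω, Real.exp (t * ξ r ω) ∂P = (Real.exp t - 1) * (P {ω | X r ω ≤ (1/2:ℝ)}).toReal + 1 :=
    fun t r => exp_ite_aux P (X r) (hmeas r) (1/2) t
  have hmgf : ∀ t : ℝ, mgf (∑ r, ξ r) P t = ((Real.exp t + 1)/2)^n := by
    intro t
    rw [hξind.mgf_sum hξm]
    have hval1 : ∀ r : Fin n, mgf (ξ r) P t = (Real.exp t + 1)/2 := by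
      intro r
      show ∫ ω, Real.exp (t * ξ r ω) ∂P = _
      rw [(haux t r).2, hhalf r]; ring
    simp [hval1, Finset.card_univ]
    rw [div_pow]
  have hint : ∀ t : ℝ, Integrable (fun ω => Real.exp (t * (∑ r, ξ r) ω)) P :=
    fun t => hξind.integrable_exp_mul_sum hξm (fun r _ => (haux t r).1)
  -- tail bounds
  have hup : (P {ω | (n:ℝ)/2 + 2*n*δ ≤ (∑ r, ξ r) ω}).toReal ≤ Real.exp (-(8*n*δ^2)) := by
    have h := measure_ge_le_exp_mul_mgf (μ := P) (X := ∑ r, ξ r) ((n:ℝ)/2 + 2*n*δ)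
      (by positivity : (0:ℝ) ≤ 8*δ) (hint (8*δ))
    refine h.trans ?_
    rw [hmgf]
    have hbase : (Real.exp (8*δ) + 1)/2 ≤ Real.exp (4*δ + 8*δ^2) := by
      have hc := Real.cosh_le_exp_half_sq (4*δ)
      have heq2 : (Real.exp (8*δ) + 1)/2 = Real.exp (4*δ) * Real.cosh (4*δ) := by
        have e1 : Real.exp (8*δ) = Real.exp (4*δ) * Real.exp (4*δ) := by
          rw [← Real.exp_add]; congr 1; ring
        have e2 : Real.exp (4*δ) * Real.exp (-(4*δ)) = 1 := by
          rw [← Real.exp_add]; simp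
        rw [Real.cosh_eq]
        linear_combination e1 / 2 - e2 / 2
      rw [heq2]
      calc Real.exp (4*δ) * Real.cosh (4*δ)
          ≤ Real.exp (4*δ) * Real.exp ((4*δ)^2/2) :=
            mul_le_mul_of_nonneg_left hc (Real.exp_nonneg _)
        _ = Real.exp (4*δ + 8*δ^2) := by rw [← Real.exp_add]; ring_nf
    calc Real.exp (-(8*δ) * ((n:ℝ)/2 + 2*n*δ)) * ((Real.exp (8*δ)+1)/2)^n
        ≤ Real.exp (-(8*δ) * ((n:ℝ)/2 + 2*n*δ)) * (Real.exp (4*δ + 8*δ^2))^n :=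
          mul_le_mul_of_nonneg_left (pow_le_pow_left₀ (by positivity) hbase n)
            (Real.exp_nonneg _)
      _ = Real.exp (-(8*δ) * ((n:ℝ)/2 + 2*n*δ) + n*(4*δ + 8*δ^2)) := by
          rw [← Real.exp_nat_mul, ← Real.exp_add]
      _ = Real.exp (-(8*n*δ^2)) := by congr 1; ring
  have hlo : (P {ω | (∑ r, ξ r) ω ≤ (n:ℝ)/2 - 2*n*δ}).toReal ≤ Real.exp (-(8*n*δ^2)) := by
    have h := measure_le_le_exp_mul_mgf (μ := P) (X := ∑ r, ξ r) ((n:ℝ)/2 - 2*n*δ)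
      (by linarith : -(8*δ) ≤ 0) (hint (-(8*δ)))
    refine h.trans ?_
    rw [hmgf]
    have hbase : (Real.exp (-(8*δ)) + 1)/2 ≤ Real.exp (-(4*δ) + 8*δ^2) := by
      have hc := Real.cosh_le_exp_half_sq (4*δ)
      have heq2 : (Real.exp (-(8*δ)) + 1)/2 = Real.exp (-(4*δ)) * Real.cosh (4*δ) := by
        have e3 : Real.exp (-(8*δ)) = Real.exp (-(4*δ)) * Real.exp (-(4*δ)) := by
          rw [← Real.exp_add]; congr 1; ring
        have e2 : Real.exp (4*δ) * Real.exp (-(4*δ)) = 1 := by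
          rw [← Real.exp_add]; simp
        rw [Real.cosh_eq]
        linear_combination e3 / 2 - e2 / 2
      rw [heq2]
      calc Real.exp (-(4*δ)) * Real.cosh (4*δ)
          ≤ Real.exp (-(4*δ)) * Real.exp ((4*δ)^2/2) :=
            mul_le_mul_of_nonneg_left hc (Real.exp_nonneg _)
        _ = Real.exp (-(4*δ) + 8*δ^2) := by rw [← Real.exp_add]; ring_nf
    calc Real.exp (-(-(8*δ)) * ((n:ℝ)/2 - 2*n*δ)) * ((Real.exp (-(8*δ))+1)/2)^n
        ≤ Real.exp (-(-(8*δ)) * ((n:ℝ)/2 - 2*n*δ)) * (Real.exp (-(4*δ) + 8*δ^2))^n :=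
          mul_le_mul_of_nonneg_left (pow_le_pow_left₀ (by positivity) hbase n)
            (Real.exp_nonneg _)
      _ = Real.exp (-(-(8*δ)) * ((n:ℝ)/2 - 2*n*δ) + n*(-(4*δ) + 8*δ^2)) := by
          rw [← Real.exp_nat_mul, ← Real.exp_add]
      _ = Real.exp (-(8*n*δ^2)) := by congr 1; ring
  -- null set where some Xr ≤ 0
  have hNull : P (⋃ r, {ω | X r ω ≤ (0:ℝ)}) = 0 := by
    apply measure_iUnion_null
    intro r
    have h0 := hunif r 0 ⟨le_refl 0, zero_le_one⟩
    exact (ENNReal.toReal_eq_zero_iff _).1 h0 |>.resolve_right (measure_ne_top _ _)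
  -- inclusion of events
  have hsub : {ω | |BY 2 n X ω x - x| ≥ 4*x*(1-x)*δ} ⊆
      (⋃ r, {ω | X r ω ≤ (0:ℝ)}) ∪
      ({ω | (n:ℝ)/2 + 2*n*δ ≤ (∑ r, ξ r) ω} ∪ {ω | (∑ r, ξ r) ω ≤ (n:ℝ)/2 - 2*n*δ}) := by
    intro ω hω
    by_cases hN : ∃ r, X r ω ≤ 0
    · left
      obtain ⟨r, hr⟩ := hN
      exact Set.mem_iUnion.2 ⟨r, hr⟩
    · right
      push_neg at hN
      set S := (∑ r, ξ r) ω with hS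
      have hSsum : S = ∑ r, (if X r ω ≤ (1/2:ℝ) then (1:ℝ) else 0) := by
        rw [hS, Finset.sum_apply]
        rfl
      have he0 : empY n X 0 ω = 0 := by
        have hz : ∀ r : Fin n, r ∈ Finset.univ → (if X r ω ≤ (0:ℝ) then (1:ℝ) else 0) = 0 :=
          fun r _ => if_neg (not_le.2 (hN r))
        rw [empY, Finset.sum_eq_zero hz, mul_zero]
      have he1 : empY n X 1 ω = 1 := by
        have ho : ∀ r : Fin n, r ∈ Finset.univ → (if X r ω ≤ (1:ℝ) then (1:ℝ) else 0) = 1 :=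
          fun r _ => if_pos (hval r ω).2
        rw [empY, Finset.sum_congr rfl ho, Finset.sum_const, Finset.card_univ,
          Fintype.card_fin]
        simp [hn0]
      have he2 : empY n X (1/2) ω = 1/(n:ℝ) * S := by
        rw [empY, hSsum]
      have hBY : BY 2 n X ω x = empY n X 0 ω * bern 2 0 x + empY n X (1/2) ω * bern 2 1 x
          + empY n X 1 ω * bern 2 2 x := by
        rw [BY]
        rw [Finset.sum_range_succ, Finset.sum_range_succ, Finset.sum_range_one]
        norm_num
      have hdiff : BY 2 n X ω x - x = 2*x*(1-x) * (S/(n:ℝ) - 1/2) := by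
        rw [hBY, he0, he1, he2]
        simp only [bern]
        norm_num [Nat.choose]
        ring
      have hω' : 4*x*(1-x)*δ ≤ |BY 2 n X ω x - x| := hω
      rw [hdiff, abs_mul, abs_of_pos (by nlinarith : (0:ℝ) < 2*x*(1-x))] at hω'
      have habs : 2*δ ≤ |S/(n:ℝ) - 1/2| := by
        have h2 : 2*x*(1-x) * (2*δ) ≤ 2*x*(1-x) * |S/(n:ℝ) - 1/2| := by linarith
        exact le_of_mul_le_mul_left h2 (by nlinarith)
      have hSn : S/(n:ℝ)*(n:ℝ) = S := div_mul_cancel₀ S hn0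
      rcases le_abs.1 habs with h | h
      · left
        have h2 := mul_le_mul_of_nonneg_right h hnpos.le
        rw [sub_mul, hSn] at h2
        show (n:ℝ)/2 + 2*n*δ ≤ S
        linarith
      · right
        have h2 := mul_le_mul_of_nonneg_right h hnpos.le
        rw [neg_mul, sub_mul, hSn] at h2
        show S ≤ (n:ℝ)/2 - 2*n*δ
        linarith
  constructor
  · refine le_trans (measure_mono hsub) ?_
    refine le_trans (measure_union_le _ _) ?_
    rw [hNull, zero_add]
    refine le_trans (measure_union_le _ _) ?_
    have f1 : P {ω | (n:ℝ)/2 + 2*n*δ ≤ (∑ r, ξ r) ω}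
        ≤ ENNReal.ofReal (Real.exp (-(8*n*δ^2))) := by
      rw [← ENNReal.ofReal_toReal (measure_ne_top P _)]
      exact ENNReal.ofReal_le_ofReal hup
    have f2 : P {ω | (∑ r, ξ r) ω ≤ (n:ℝ)/2 - 2*n*δ}
        ≤ ENNReal.ofReal (Real.exp (-(8*n*δ^2))) := by
      rw [← ENNReal.ofReal_toReal (measure_ne_top P _)]
      exact ENNReal.ofReal_le_ofReal hlo
    refine le_trans (add_le_add f1 f2) ?_
    rw [← ENNReal.ofReal_add (Real.exp_nonneg _) (Real.exp_nonneg _)]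
    apply ENNReal.ofReal_le_ofReal
    have htau : tau (8*δ) ≤ 32*δ^2 := by
      have := tau_le' (by positivity : (0:ℝ) ≤ 8*δ)
      nlinarith
    have hexp : Real.exp (-(8*n*δ^2)) ≤ Real.exp (-((n:ℝ) * tau (8*δ) / 4)) := by
      apply Real.exp_le_exp.2
      nlinarith [mul_le_mul_of_nonneg_left htau (by positivity : (0:ℝ) ≤ (n:ℝ)/4)]
    linarith
  · intro hδ8
    have h1 := tau_ge' (by positivity : (0:ℝ) ≤ 8*δ)
    have hkey : 8*(n:ℝ)*δ^2*(1-(8/3)*δ) ≤ (n:ℝ) * tau (8*δ)/4 := by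
      nlinarith [mul_le_mul_of_nonneg_left h1 (by positivity : (0:ℝ) ≤ (n:ℝ)/4)]
    have := Real.exp_le_exp.2 (neg_le_neg hkey)
    linarith
end

section
/- Let n ≥ 1 and r ≥ 0 be integers, d > 0, and let Z₁, …, Z_n be i.i.d. random vectors with values in ℝ^{r+1} (write Z_j = (Z_j(0), …, Z_j(r))) such that E[Z₁(i)] = 0 and |Z_j(i)| ≤ d almost surely for every i and j. Let α₀, …, α_r ≥ 0 with Σ_{i=0}^r α_i = 1, set W = Σ_{j=1}^n Σ_{i=0}^r α_i Z_j(i), and set v = Σ_{i=0}^r α_i E[Z₁(i)²]. Then for every c ≥ v/d² and every ε > 0, P( |W| ≥ n·c·d·ε ) ≤ 2 e^{−n·c·τ(ε)}. -/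
open Set Finset MeasureTheory ProbabilityTheory Nat

-- auxiliary lemmas
lemma real_exp_tsum (y : ℝ) : Real.exp y = ∑' n : ℕ, y ^ n / (n ! : ℝ) := by
  rw [Real.exp_eq_exp_ℝ, NormedSpace.exp_eq_tsum_div]

lemma exp_sub_eq (y : ℝ) : Real.exp y - 1 - y = ∑' k : ℕ, y ^ (k + 2) / (((k + 2)! : ℕ) : ℝ) := by
  have hs := Real.summable_pow_div_factorial y
  have h2 := Summable.sum_add_tsum_nat_add (f := fun n : ℕ => y ^ n / (n ! : ℝ)) 2 hs
  rw [real_exp_tsum y, ← h2]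
  simp [Finset.sum_range_succ]
  ring

lemma exp_compare {y Y : ℝ} (hY : 0 ≤ Y) (h : |y| ≤ Y) :
    Real.exp y - 1 - y ≤ y ^ 2 / Y ^ 2 * (Real.exp Y - 1 - Y) := by
  rcases eq_or_lt_of_le hY with hY0 | hY0
  · have : y = 0 := by nlinarith [abs_nonneg y, le_abs_self y, neg_abs_le y]
    simp [this, ← hY0]
  have hsum1 : Summable fun k : ℕ => y ^ (k + 2) / (((k + 2)! : ℕ) : ℝ) :=
    (summable_nat_add_iff 2).mpr (Real.summable_pow_div_factorial y)
  have hsum2 : Summable fun k : ℕ => y ^ 2 / Y ^ 2 * (Y ^ (k + 2) / (((k + 2)! : ℕ) : ℝ)) :=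
    ((summable_nat_add_iff 2).mpr (Real.summable_pow_div_factorial Y)).mul_left _
  rw [exp_sub_eq, exp_sub_eq, ← tsum_mul_left]
  refine Summable.tsum_le_tsum (fun k => ?_) hsum1 hsum2
  have hb : y ^ (k + 2) ≤ y ^ 2 * Y ^ k := by
    calc y ^ (k + 2) ≤ |y ^ (k + 2)| := le_abs_self _
    _ = |y| ^ 2 * |y| ^ k := by rw [abs_pow]; ring
    _ ≤ |y| ^ 2 * Y ^ k := by gcongr
    _ = y ^ 2 * Y ^ k := by rw [sq_abs]
  have hfac : (0:ℝ) < (((k + 2)! : ℕ) : ℝ) := by positivity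
  have heq : y ^ 2 / Y ^ 2 * (Y ^ (k + 2) / (((k + 2)! : ℕ) : ℝ))
      = y ^ 2 * Y ^ k / (((k + 2)! : ℕ) : ℝ) := by
    field_simp
    ring
  rw [heq]
  gcongr

lemma int_of_bdd {Ω : Type*} [MeasurableSpace Ω] {P : Measure Ω} [IsProbabilityMeasure P]
    {f : Ω → ℝ} (hf : AEStronglyMeasurable f P) {C : ℝ} (h : ∀ᵐ ω ∂P, |f ω| ≤ C) :
    Integrable f P :=
  ⟨hf, HasFiniteIntegral.of_bounded (C := C) (by simpa [Real.norm_eq_abs] using h)⟩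

lemma mgf_single {Ω : Type*} [MeasurableSpace Ω] (P : Measure Ω) [IsProbabilityMeasure P]
    {d : ℝ} (hd : 0 < d) {X : Ω → ℝ} (hX : Measurable X)
    (hb : ∀ᵐ ω ∂P, |X ω| ≤ d) (hm : ∫ ω, X ω ∂P = 0)
    {c : ℝ} (hc : 0 ≤ c) (hvar : ∫ ω, (X ω) ^ 2 ∂P ≤ c * d ^ 2) {t : ℝ} (ht : 0 ≤ t) :
    mgf X P t ≤ Real.exp (c * (Real.exp (t * d) - 1 - t * d)) := by
  set g : ℝ := Real.exp (t * d) - 1 - t * d with hg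
  have hg0 : 0 ≤ g := by
    have := Real.add_one_le_exp (t * d)
    simp only [hg]; linarith
  -- integrability
  have hintX : Integrable X P := int_of_bdd hX.aestronglyMeasurable hb
  have hintX2 : Integrable (fun ω => (X ω) ^ 2) P := by
    refine int_of_bdd (hX.pow_const 2).aestronglyMeasurable (C := d ^ 2) ?_
    filter_upwards [hb] with ω h
    rw [abs_pow]
    exact pow_le_pow_left₀ (abs_nonneg _) h 2
  have hintExp : Integrable (fun ω => Real.exp (t * X ω)) P := by
    refine int_of_bdd ((hX.const_mul t).exp).aestronglyMeasurable (C := Real.exp (t * d)) ?_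
    filter_upwards [hb] with ω h
    rw [abs_of_pos (Real.exp_pos _), Real.exp_le_exp]
    have := le_abs_self (X ω)
    nlinarith
  -- pointwise bound
  have hpt : ∀ᵐ ω ∂P, Real.exp (t * X ω) ≤ 1 + t * X ω + (X ω) ^ 2 / d ^ 2 * g := by
    filter_upwards [hb] with ω h
    rcases eq_or_lt_of_le ht with ht0 | ht0
    · subst ht0
      simp only [zero_mul, Real.exp_zero]
      have h2 : 0 ≤ (X ω) ^ 2 / d ^ 2 := by positivity
      nlinarith [mul_nonneg h2 hg0]
    · have habs : |t * X ω| ≤ t * d := by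
        rw [abs_mul, abs_of_pos ht0]
        exact mul_le_mul_of_nonneg_left h ht0.le
      have := exp_compare (by positivity) habs
      have hrw : (t * X ω) ^ 2 / (t * d) ^ 2 = (X ω) ^ 2 / d ^ 2 := by
        field_simp
      rw [hrw] at this
      linarith
  have key : mgf X P t ≤ 1 + c * g := by
    rw [mgf]
    have h1 : Integrable (fun ω => 1 + t * X ω) P := by
      exact (integrable_const 1).add (hintX.const_mul t)
    have h2 : Integrable (fun ω => (X ω) ^ 2 / d ^ 2 * g) P := by
      exact (hintX2.div_const (d ^ 2)).mul_const g
    have hRHSint : Integrable (fun ω => 1 + t * X ω + (X ω) ^ 2 / d ^ 2 * g) P := h1.add h2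
    calc ∫ ω, Real.exp (t * X ω) ∂P ≤ ∫ ω, (1 + t * X ω + (X ω) ^ 2 / d ^ 2 * g) ∂P :=
          integral_mono_ae hintExp hRHSint hpt
    _ = 1 + t * ∫ ω, X ω ∂P + (∫ ω, (X ω) ^ 2 ∂P) / d ^ 2 * g := by
        rw [integral_add h1 h2, integral_add (integrable_const 1) (hintX.const_mul t),
          integral_const_mul, integral_mul_const, integral_div]
        simp
    _ = 1 + (∫ ω, (X ω) ^ 2 ∂P) / d ^ 2 * g := by rw [hm]; ring
    _ ≤ 1 + c * g := by
        gcongr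
        rw [div_le_iff₀ (by positivity)]
        linarith [hvar]
  calc mgf X P t ≤ 1 + c * g := key
  _ ≤ Real.exp (c * g) := by linarith [Real.add_one_le_exp (c * g)]

lemma mgf_map_eq {Ω : Type*} [MeasurableSpace Ω] {P : Measure Ω}
    {X Y : Ω → ℝ} (hX : Measurable X) (hY : Measurable Y)
    (h : P.map X = P.map Y) (t : ℝ) : mgf X P t = mgf Y P t := by
  have hme : AEStronglyMeasurable (fun x : ℝ => Real.exp (t * x)) (P.map X) :=
    (Real.continuous_exp.comp (continuous_const.mul continuous_id)).aestronglyMeasurable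
  have hmeY : AEStronglyMeasurable (fun x : ℝ => Real.exp (t * x)) (P.map Y) := by
    rwa [← h]
  rw [mgf, mgf, ← integral_map hX.aemeasurable hme, h, integral_map hY.aemeasurable hmeY]

lemma tail_one {Ω : Type*} [MeasurableSpace Ω] (P : Measure Ω) [IsProbabilityMeasure P]
    (n : ℕ) {d c : ℝ} (hd : 0 < d) (hc : 0 ≤ c) (X : Fin n → Ω → ℝ)
    (hmeas : ∀ j, Measurable (X j))
    (hindep : iIndepFun X P)
    (hbound : ∀ j, ∀ᵐ ω ∂P, |X j ω| ≤ d)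
    (hmgf : ∀ j t, 0 ≤ t → mgf (X j) P t ≤ Real.exp (c * (Real.exp (t * d) - 1 - t * d)))
    {ε : ℝ} (hε : 0 < ε) :
    P {ω | (n : ℝ) * c * d * ε ≤ ∑ j, X j ω} ≤
      ENNReal.ofReal (Real.exp (-((n : ℝ) * c * tau ε))) := by
  set t : ℝ := Real.log (1 + ε) / d with htdef
  have hlog : 0 < Real.log (1 + ε) := Real.log_pos (by linarith)
  have ht : 0 ≤ t := by positivity
  have htd : t * d = Real.log (1 + ε) := by rw [htdef, div_mul_cancel₀ _ hd.ne']
  -- integrability of exp (t * sum)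
  have hsb : ∀ᵐ ω ∂P, ∑ j, X j ω ≤ (n : ℝ) * d := by
    have := (ae_all_iff).mpr hbound
    filter_upwards [this] with ω h
    calc ∑ j, X j ω ≤ ∑ j : Fin n, d :=
      Finset.sum_le_sum fun j _ => le_trans (le_abs_self _) (h j)
    _ = (n : ℝ) * d := by simp [Finset.sum_const, mul_comm]
  have hint : Integrable (fun ω => Real.exp (t * ∑ j, X j ω)) P := by
    refine int_of_bdd ?_ (C := Real.exp (t * ((n : ℝ) * d))) ?_
    · exact ((Finset.measurable_sum Finset.univ (fun j _ => hmeas j)).const_mul t).exp.aestronglyMeasurable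
    · filter_upwards [hsb] with ω h
      rw [abs_of_pos (Real.exp_pos _), Real.exp_le_exp]
      exact mul_le_mul_of_nonneg_left h ht
  have hsum_eq : (fun ω => ∑ j, X j ω) = ∑ j, X j := by
    funext ω; simp
  have chern := measure_ge_le_exp_mul_mgf (μ := P) (X := fun ω => ∑ j, X j ω) (t := t)
    ((n : ℝ) * c * d * ε) ht hint
  have hmgfsum : mgf (fun ω => ∑ j, X j ω) P t ≤ Real.exp ((n : ℝ) * (c * (Real.exp (t * d) - 1 - t * d))) := by
    rw [hsum_eq, hindep.mgf_sum hmeas]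
    calc ∏ j : Fin n, mgf (X j) P t
        ≤ ∏ j : Fin n, Real.exp (c * (Real.exp (t * d) - 1 - t * d)) :=
          Finset.prod_le_prod (fun j _ => mgf_nonneg) (fun j _ => hmgf j t ht)
    _ = Real.exp (c * (Real.exp (t * d) - 1 - t * d)) ^ n := by simp
    _ = Real.exp ((n : ℝ) * (c * (Real.exp (t * d) - 1 - t * d))) := by
        rw [← Real.exp_nat_mul]
  have hfinal : Real.exp (-t * ((n : ℝ) * c * d * ε)) *
      Real.exp ((n : ℝ) * (c * (Real.exp (t * d) - 1 - t * d)))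
      = Real.exp (-((n : ℝ) * c * tau ε)) := by
    rw [← Real.exp_add]
    congr 1
    rw [htd, Real.exp_log (by linarith : (0:ℝ) < 1 + ε), tau]
    have : -t * ((n : ℝ) * c * d * ε) = -Real.log (1 + ε) * ((n : ℝ) * c * ε) := by
      rw [htdef]; field_simp
    rw [this]; ring
  have hb2 : (P {ω | (n : ℝ) * c * d * ε ≤ ∑ j, X j ω}).toReal ≤
      Real.exp (-((n : ℝ) * c * tau ε)) := by
    refine le_trans chern ?_
    rw [← hfinal]
    exact mul_le_mul_of_nonneg_left hmgfsum (Real.exp_pos _).le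
  calc P {ω | (n : ℝ) * c * d * ε ≤ ∑ j, X j ω}
      = ENNReal.ofReal (P {ω | (n : ℝ) * c * d * ε ≤ ∑ j, X j ω}).toReal :=
        (ENNReal.ofReal_toReal (measure_ne_top _ _)).symm
  _ ≤ ENNReal.ofReal (Real.exp (-((n : ℝ) * c * tau ε))) := ENNReal.ofReal_le_ofReal hb2

theorem concentration_inequality
    {Ω : Type*} [MeasurableSpace Ω] (P : Measure Ω) [IsProbabilityMeasure P]
    (n : ℕ) (hn : 1 ≤ n) (r : ℕ) (d : ℝ) (hd : 0 < d)
    (Z : Fin n → Ω → (Fin (r + 1) → ℝ))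
    (hmeas : ∀ j, Measurable (Z j))
    (hindep : iIndepFun Z P)
    (hident : ∀ j, Measure.map (Z j) P = Measure.map (Z ⟨0, hn⟩) P)
    (hmean : ∀ i, ∫ ω, Z ⟨0, hn⟩ ω i ∂P = 0)
    (hbound : ∀ j i, ∀ᵐ ω ∂P, |Z j ω i| ≤ d)
    (a : Fin (r + 1) → ℝ) (ha : ∀ i, 0 ≤ a i) (hsum : ∑ i, a i = 1)
    (W : Ω → ℝ) (hW : W = fun ω => ∑ j, ∑ i, a i * Z j ω i)
    (v : ℝ) (hv : v = ∑ i, a i * ∫ ω, (Z ⟨0, hn⟩ ω i) ^ 2 ∂P)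
    (c : ℝ) (hc : v / d ^ 2 ≤ c) (ε : ℝ) (hε : 0 < ε) :
    P {ω | |W ω| ≥ n * c * d * ε} ≤ ENNReal.ofReal (2 * Real.exp (-(n * c * tau ε))) := by
  have hd2 : (0:ℝ) < d ^ 2 := by positivity
  set X : Fin n → Ω → ℝ := fun j ω => ∑ i, a i * Z j ω i with hXdef
  have hg : Measurable (fun w : Fin (r+1) → ℝ => ∑ i, a i * w i) :=
    Finset.measurable_sum _ (fun i _ => by fun_prop)
  have hmeasX : ∀ j, Measurable (X j) := fun j => hg.comp (hmeas j)
  have hindepX : iIndepFun X P :=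
    hindep.comp (fun _ w => ∑ i, a i * w i) (fun _ => hg)
  -- bound on X
  have hboundX : ∀ j, ∀ᵐ ω ∂P, |X j ω| ≤ d := by
    intro j
    filter_upwards [(ae_all_iff).mpr (hbound j)] with ω h
    calc |∑ i, a i * Z j ω i| ≤ ∑ i, |a i * Z j ω i| := Finset.abs_sum_le_sum_abs _ _
    _ = ∑ i, a i * |Z j ω i| := by
        refine Finset.sum_congr rfl fun i _ => ?_
        rw [abs_mul, abs_of_nonneg (ha i)]
    _ ≤ ∑ i, a i * d := Finset.sum_le_sum fun i _ => mul_le_mul_of_nonneg_left (h i) (ha i)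
    _ = d := by rw [← Finset.sum_mul, hsum, one_mul]
  -- identical distribution of X
  have hmapX : ∀ j, P.map (X j) = P.map (X ⟨0, hn⟩) := by
    intro j
    have h1 : X j = (fun w : Fin (r+1) → ℝ => ∑ i, a i * w i) ∘ Z j := rfl
    have h2 : X ⟨0, hn⟩ = (fun w : Fin (r+1) → ℝ => ∑ i, a i * w i) ∘ Z ⟨0, hn⟩ := rfl
    rw [h1, h2, ← Measure.map_map hg (hmeas j), ← Measure.map_map hg (hmeas _), hident j]
  -- moments of X₀
  have hmeasZi : ∀ (j) (i : Fin (r+1)), Measurable fun ω => Z j ω i :=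
    fun j i => (measurable_pi_apply i).comp (hmeas j)
  have hintZ : ∀ i, Integrable (fun ω => Z ⟨0, hn⟩ ω i) P :=
    fun i => int_of_bdd (hmeasZi _ i).aestronglyMeasurable (hbound _ i)
  have hmeanX : ∫ ω, X ⟨0, hn⟩ ω ∂P = 0 := by
    have : ∫ ω, X ⟨0, hn⟩ ω ∂P = ∑ i, ∫ ω, a i * Z ⟨0, hn⟩ ω i ∂P :=
      integral_finset_sum _ (fun i _ => (hintZ i).const_mul _)
    rw [this]
    simp [integral_const_mul, hmean]
  have hc0 : 0 ≤ c := by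
    refine le_trans ?_ hc
    apply div_nonneg _ hd2.le
    rw [hv]
    exact Finset.sum_nonneg fun i _ =>
      mul_nonneg (ha i) (integral_nonneg fun ω => sq_nonneg _)
  have hintZ2 : ∀ (j) (i : Fin (r+1)), Integrable (fun ω => (Z j ω i) ^ 2) P := by
    intro j i
    refine int_of_bdd ((hmeasZi j i).pow_const 2).aestronglyMeasurable (C := d ^ 2) ?_
    filter_upwards [hbound j i] with ω h
    rw [abs_pow]
    exact pow_le_pow_left₀ (abs_nonneg _) h 2
  have hintX2 : Integrable (fun ω => (X ⟨0, hn⟩ ω) ^ 2) P := by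
    refine int_of_bdd ((hmeasX _).pow_const 2).aestronglyMeasurable (C := d ^ 2) ?_
    filter_upwards [hboundX ⟨0, hn⟩] with ω h
    rw [abs_pow]
    exact pow_le_pow_left₀ (abs_nonneg _) h 2
  have hvarX : ∫ ω, (X ⟨0, hn⟩ ω) ^ 2 ∂P ≤ c * d ^ 2 := by
    have hpt : ∀ ω, (X ⟨0, hn⟩ ω) ^ 2 ≤ ∑ i, a i * (Z ⟨0, hn⟩ ω i) ^ 2 := by
      intro ω
      have h1 : ∀ i : Fin (r+1), Real.sqrt (a i) * (Real.sqrt (a i) * Z ⟨0, hn⟩ ω i)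
          = a i * Z ⟨0, hn⟩ ω i := by
        intro i; rw [← mul_assoc, Real.mul_self_sqrt (ha i)]
      have h2 : ∀ i : Fin (r+1), Real.sqrt (a i) ^ 2 = a i := fun i => Real.sq_sqrt (ha i)
      have h3 : ∀ i : Fin (r+1), (Real.sqrt (a i) * Z ⟨0, hn⟩ ω i) ^ 2
          = a i * (Z ⟨0, hn⟩ ω i) ^ 2 := by
        intro i; rw [mul_pow, h2]
      calc (X ⟨0, hn⟩ ω) ^ 2
          = (∑ i, Real.sqrt (a i) * (Real.sqrt (a i) * Z ⟨0, hn⟩ ω i)) ^ 2 := by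
            congr 1
            exact (Finset.sum_congr rfl fun i _ => (h1 i)).symm
      _ ≤ (∑ i, Real.sqrt (a i) ^ 2) * ∑ i, (Real.sqrt (a i) * Z ⟨0, hn⟩ ω i) ^ 2 :=
            Finset.sum_mul_sq_le_sq_mul_sq _ _ _
      _ = ∑ i, a i * (Z ⟨0, hn⟩ ω i) ^ 2 := by
            rw [Finset.sum_congr rfl fun i _ => h2 i, hsum, one_mul]
            exact Finset.sum_congr rfl fun i _ => h3 i
    calc ∫ ω, (X ⟨0, hn⟩ ω) ^ 2 ∂P ≤ ∫ ω, ∑ i, a i * (Z ⟨0, hn⟩ ω i) ^ 2 ∂P := by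
          refine integral_mono hintX2 ?_ hpt
          exact integrable_finset_sum _ (fun i _ => (hintZ2 _ i).const_mul _)
    _ = ∑ i, a i * ∫ ω, (Z ⟨0, hn⟩ ω i) ^ 2 ∂P := by
          rw [integral_finset_sum _ (fun i _ => (hintZ2 _ i).const_mul _)]
          exact Finset.sum_congr rfl fun i _ => integral_const_mul _ _
    _ = v := hv.symm
    _ ≤ c * d ^ 2 := (div_le_iff₀ hd2).mp hc
  -- mgf bound for each X j
  have hmgfX : ∀ (j) (t : ℝ), 0 ≤ t →
      mgf (X j) P t ≤ Real.exp (c * (Real.exp (t * d) - 1 - t * d)) := by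
    intro j t ht
    rw [mgf_map_eq (hmeasX j) (hmeasX _) (hmapX j) t]
    exact mgf_single P hd (hmeasX _) (hboundX _) hmeanX hc0 hvarX ht
  have tail1 := tail_one P n hd hc0 X hmeasX hindepX hboundX hmgfX hε
  -- negated variables
  set Y : Fin n → Ω → ℝ := fun j ω => -X j ω with hYdef
  have hmeasY : ∀ j, Measurable (Y j) := fun j => (hmeasX j).neg
  have hindepY : iIndepFun Y P :=
    hindepX.comp (fun _ => Neg.neg) (fun _ => measurable_neg)
  have hboundY : ∀ j, ∀ᵐ ω ∂P, |Y j ω| ≤ d := by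
    intro j
    filter_upwards [hboundX j] with ω h
    simpa [hYdef, abs_neg] using h
  have hmapY : ∀ j, P.map (Y j) = P.map (Y ⟨0, hn⟩) := by
    intro j
    have h1 : Y j = Neg.neg ∘ X j := rfl
    have h2 : Y ⟨0, hn⟩ = Neg.neg ∘ X ⟨0, hn⟩ := rfl
    rw [h1, h2, ← Measure.map_map measurable_neg (hmeasX j),
      ← Measure.map_map measurable_neg (hmeasX _), hmapX j]
  have hmeanY : ∫ ω, Y ⟨0, hn⟩ ω ∂P = 0 := by
    have : ∫ ω, Y ⟨0, hn⟩ ω ∂P = -∫ ω, X ⟨0, hn⟩ ω ∂P := integral_neg _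
    rw [this, hmeanX, neg_zero]
  have hvarY : ∫ ω, (Y ⟨0, hn⟩ ω) ^ 2 ∂P ≤ c * d ^ 2 := by
    have : ∀ ω, (Y ⟨0, hn⟩ ω) ^ 2 = (X ⟨0, hn⟩ ω) ^ 2 := fun ω => neg_sq _
    simpa [this] using hvarX
  have hmgfY : ∀ (j) (t : ℝ), 0 ≤ t →
      mgf (Y j) P t ≤ Real.exp (c * (Real.exp (t * d) - 1 - t * d)) := by
    intro j t ht
    rw [mgf_map_eq (hmeasY j) (hmeasY _) (hmapY j) t]
    exact mgf_single P hd (hmeasY _) (hboundY _) hmeanY hc0 hvarY ht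
  have tail2 := tail_one P n hd hc0 Y hmeasY hindepY hboundY hmgfY hε
  -- combine
  have hsub : {ω | |W ω| ≥ (n : ℝ) * c * d * ε} ⊆
      {ω | (n : ℝ) * c * d * ε ≤ ∑ j, X j ω} ∪ {ω | (n : ℝ) * c * d * ε ≤ ∑ j, Y j ω} := by
    intro ω hω
    simp only [mem_setOf_eq, ge_iff_le, mem_union] at *
    have hWX : W ω = ∑ j, X j ω := by rw [hW]
    rw [hWX] at hω
    rcases le_abs.mp hω with h | h
    · exact Or.inl h
    · refine Or.inr ?_
      calc (n : ℝ) * c * d * ε ≤ -∑ j, X j ω := h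
      _ = ∑ j, Y j ω := (Finset.sum_neg_distrib _).symm
  calc P {ω | |W ω| ≥ (n : ℝ) * c * d * ε}
      ≤ P ({ω | (n : ℝ) * c * d * ε ≤ ∑ j, X j ω} ∪ {ω | (n : ℝ) * c * d * ε ≤ ∑ j, Y j ω}) :=
        measure_mono hsub
  _ ≤ P {ω | (n : ℝ) * c * d * ε ≤ ∑ j, X j ω} + P {ω | (n : ℝ) * c * d * ε ≤ ∑ j, Y j ω} :=
        measure_union_le _ _
  _ ≤ ENNReal.ofReal (Real.exp (-((n : ℝ) * c * tau ε)))
      + ENNReal.ofReal (Real.exp (-((n : ℝ) * c * tau ε))) := add_le_add tail1 tail2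
  _ = ENNReal.ofReal (2 * Real.exp (-((n : ℝ) * c * tau ε))) := by
      rw [← ENNReal.ofReal_add (Real.exp_pos _).le (Real.exp_pos _).le, two_mul]
end
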